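/- arXiv:1710.00308 — 9 statements merged into one kernel-verified Lean document; each statement's English description precedes it below -/
import Mathlib

section
/- Let ε>0, k ≥ 1, and define f_ε: ℝ^k → ℝ by f_ε(x_1,…,x_k) = 1/(1 + Σ_{i=1}^k exp(-x_i/ε)). Then for arbitrary real sequences (x_1,…,x_k) and (x'_1,…,x'_k), f_ε(x_1,…,x_k) - f_ε(x'_1,…,x'_k) ≤ (1/(4ε)) Σ_{i=1}^k max(x_i - x'_i, 0). -/
open Real

lemma sig_hasDeriv (t : ℝ) :
    HasDerivAt (fun x : ℝ => (1 + Real.exp x)⁻¹)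
      (-(Real.exp t) / (1 + Real.exp t) ^ 2) t := by
  have h1 : HasDerivAt (fun x : ℝ => 1 + Real.exp x) (Real.exp t) t :=
    (Real.hasDerivAt_exp t).const_add 1
  exact h1.inv (by positivity)

lemma sig_lip : LipschitzWith (4⁻¹ : NNReal) (fun x : ℝ => (1 + Real.exp x)⁻¹) := by
  apply lipschitzWith_of_nnnorm_deriv_le (fun t => (sig_hasDeriv t).differentiableAt)
  intro t
  rw [(sig_hasDeriv t).deriv]
  rw [← NNReal.coe_le_coe]
  push_cast
  rw [Real.norm_eq_abs]
  have he : 0 < Real.exp t := Real.exp_pos t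
  rw [abs_div, abs_neg, abs_of_nonneg he.le, abs_of_nonneg (sq_nonneg _),
    div_le_iff₀ (by positivity)]
  nlinarith [sq_nonneg (1 - Real.exp t)]

lemma stepA (ε : ℝ) (hε : 0 < ε) (C : ℝ) (hC : 0 ≤ C) (p q : ℝ) (hpq : p ≤ q) :
    1 / (1 + (C + Real.exp (-q / ε))) - 1 / (1 + (C + Real.exp (-p / ε))) ≤
      (q - p) / (4 * ε) := by
  set u := Real.exp (-q / ε) with hu
  set v := Real.exp (-p / ε) with hv
  have hu0 : 0 < u := Real.exp_pos _
  have hv0 : 0 < v := Real.exp_pos _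
  have huv : u ≤ v :=
    Real.exp_le_exp.2 (div_le_div_of_nonneg_right (by linarith) hε.le)
  have hsig : 1 / (1 + u) - 1 / (1 + v) ≤ (q - p) / (4 * ε) := by
    have hlip := sig_lip.dist_le_mul (-q / ε) (-p / ε)
    rw [Real.dist_eq, Real.dist_eq] at hlip
    have habs : |(-q / ε) - (-p / ε)| = (q - p) / ε := by
      have e : (-q / ε) - (-p / ε) = -((q - p) / ε) := by ring
      rw [e, abs_neg, abs_of_nonneg (div_nonneg (by linarith) hε.le)]
    rw [habs] at hlip
    calc 1 / (1 + u) - 1 / (1 + v) ≤ |(1 + u)⁻¹ - (1 + v)⁻¹| := by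
          rw [one_div, one_div]; exact le_abs_self _
      _ ≤ (4⁻¹ : NNReal) * ((q - p) / ε) := hlip
      _ = (q - p) / (4 * ε) := by push_cast; ring
  refine le_trans ?_ hsig
  have e1 : 1 / (1 + (C + u)) - 1 / (1 + (C + v)) = (v - u) / ((1 + C + u) * (1 + C + v)) := by
    rw [div_sub_div _ _ (by positivity : (1 + (C + u)) ≠ 0) (by positivity : (1 + (C + v)) ≠ 0),
      div_eq_div_iff (by positivity) (by positivity)]
    ring
  have e2 : 1 / (1 + u) - 1 / (1 + v) = (v - u) / ((1 + u) * (1 + v)) := by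
    rw [div_sub_div _ _ (by positivity : (1 + u) ≠ 0) (by positivity : (1 + v) ≠ 0),
      div_eq_div_iff (by positivity) (by positivity)]
    ring
  rw [e1, e2]
  apply div_le_div_of_nonneg_left (by linarith) (by positivity)
  nlinarith [sq_nonneg C]

lemma stepB (ε : ℝ) (hε : 0 < ε) : ∀ (k : ℕ) (C : ℝ), 0 ≤ C → ∀ (y z : Fin k → ℝ),
    (∀ i, z i ≤ y i) →
    1 / (1 + (C + ∑ i, Real.exp (-(y i) / ε))) -
      1 / (1 + (C + ∑ i, Real.exp (-(z i) / ε))) ≤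
      (1 / (4 * ε)) * ∑ i, (y i - z i) := by
  intro k
  induction k with
  | zero =>
      intro C hC y z hyz
      simp
  | succ n ih =>
      intro C hC y z hyz
      rw [Fin.sum_univ_succ, Fin.sum_univ_succ, Fin.sum_univ_succ]
      set Sy := ∑ i : Fin n, Real.exp (-(y i.succ) / ε) with hSy
      set Sz := ∑ i : Fin n, Real.exp (-(z i.succ) / ε) with hSz
      have hSy0 : 0 ≤ Sy := Finset.sum_nonneg fun i _ => (Real.exp_pos _).le
      have ha : (0:ℝ) < Real.exp (-(z 0) / ε) := Real.exp_pos _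
      have key1 : 1 / (1 + (C + (Real.exp (-(y 0) / ε) + Sy))) -
          1 / (1 + (C + (Real.exp (-(z 0) / ε) + Sy))) ≤ (y 0 - z 0) / (4 * ε) := by
        have h := stepA ε hε (C + Sy) (by linarith) (z 0) (y 0) (hyz 0)
        convert h using 3 <;> ring
      have key2 : 1 / (1 + (C + (Real.exp (-(z 0) / ε) + Sy))) -
          1 / (1 + (C + (Real.exp (-(z 0) / ε) + Sz))) ≤
          (1 / (4 * ε)) * ∑ i : Fin n, (y i.succ - z i.succ) := by
        have h := ih (C + Real.exp (-(z 0) / ε)) (by linarith)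
          (fun i => y i.succ) (fun i => z i.succ) (fun i => hyz i.succ)
        convert h using 3 <;> ring
      have hsum : (y 0 - z 0) / (4 * ε) + (1 / (4 * ε)) * ∑ i : Fin n, (y i.succ - z i.succ) =
          (1 / (4 * ε)) * ((y 0 - z 0) + ∑ i : Fin n, (y i.succ - z i.succ)) := by
        ring
      linarith [key1, key2]

theorem softmax_one_sided_lipschitz (ε : ℝ) (hε : 0 < ε) (k : ℕ) (hk : 1 ≤ k)
    (x x' : Fin k → ℝ) :
    1 / (1 + ∑ i, Real.exp (-(x i) / ε)) - 1 / (1 + ∑ i, Real.exp (-(x' i) / ε)) ≤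
      (1 / (4 * ε)) * ∑ i, max (x i - x' i) 0 := by
  set m := fun i => max (x i) (x' i) with hm
  have hsum : ∑ i, Real.exp (-(m i) / ε) ≤ ∑ i, Real.exp (-(x i) / ε) :=
    Finset.sum_le_sum fun i _ => Real.exp_le_exp.2
      (div_le_div_of_nonneg_right (neg_le_neg (le_max_left _ _)) hε.le)
  have h1 : 1 / (1 + ∑ i, Real.exp (-(x i) / ε)) ≤ 1 / (1 + ∑ i, Real.exp (-(m i) / ε)) := by
    apply one_div_le_one_div_of_le
    · have : 0 ≤ ∑ i, Real.exp (-(m i) / ε) := Finset.sum_nonneg fun i _ => (Real.exp_pos _).le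
      linarith
    · linarith
  have h2 := stepB ε hε k 0 le_rfl m x' (fun i => le_max_right _ _)
  simp only [zero_add] at h2
  have h3 : ∑ i, (m i - x' i) = ∑ i, max (x i - x' i) 0 := by
    apply Finset.sum_congr rfl
    intro i _
    rcases le_total (x i) (x' i) with h | h
    · simp [hm, max_eq_right h, max_eq_right (sub_nonpos.2 h)]
    · simp [hm, max_eq_left h, max_eq_left (sub_nonneg.2 h)]
  rw [h3] at h2
  linarith [h1, h2]
end

section
/- Let θ_1,…,θ_n and θ'_1,…,θ'_n be nonnegative reals with Σ_i θ_i = Σ_i θ'_i = 1, and let l_1,…,l_n and l'_1,…,l'_n be nonnegative reals such that for all i,j: l_i > l_j implies θ_i = 0, and l'_i > l'_j implies θ'_i = 0. Then Σ_{i=1}^n (θ_i - θ'_i)·1[l_i > l'_i] ≤ 0. -/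
theorem balanced_comparison_nonpos (n : ℕ) (θ θ' l l' : Fin n → ℝ)
    (hθ : ∀ i, 0 ≤ θ i) (hθ' : ∀ i, 0 ≤ θ' i)
    (hl : ∀ i, 0 ≤ l i) (hl' : ∀ i, 0 ≤ l' i)
    (hsum : ∑ i, θ i = 1) (hsum' : ∑ i, θ' i = 1)
    (hmin : ∀ i j, l i > l j → θ i = 0)
    (hmin' : ∀ i j, l' i > l' j → θ' i = 0) :
    ∑ i, (θ i - θ' i) * (if l i > l' i then (1 : ℝ) else 0) ≤ 0 := by
  have hn : 0 < n := by
    rcases Nat.eq_zero_or_pos n with h | h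
    · subst h; simp at hsum
    · exact h
  obtain ⟨i0, -, hi0⟩ := Finset.exists_min_image Finset.univ l
    ⟨⟨0, hn⟩, Finset.mem_univ _⟩
  obtain ⟨j0, -, hj0⟩ := Finset.exists_min_image Finset.univ l'
    ⟨⟨0, hn⟩, Finset.mem_univ _⟩
  have hsplit : ∑ i, (θ i - θ' i) * (if l i > l' i then (1 : ℝ) else 0)
      = (∑ i, θ i * (if l i > l' i then (1 : ℝ) else 0))
        - ∑ i, θ' i * (if l i > l' i then (1 : ℝ) else 0) := by
    rw [← Finset.sum_sub_distrib]
    congr 1; ext i; ring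
  rw [hsplit]
  by_cases hc : l i0 ≤ l' j0
  · have h1 : ∀ i, θ i * (if l i > l' i then (1 : ℝ) else 0) = 0 := by
      intro i
      rcases eq_or_ne (θ i) 0 with h | h
      · simp [h]
      · have hle1 : l i ≤ l i0 := le_of_not_gt fun hh => h (hmin i i0 hh)
        have : ¬ l i > l' i :=
          not_lt.2 (le_trans (le_trans hle1 hc) (hj0 i (Finset.mem_univ i)))
        simp [this]
    have h2 : (0:ℝ) ≤ ∑ i, θ' i * (if l i > l' i then (1 : ℝ) else 0) := by
      apply Finset.sum_nonneg
      intro i _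
      have := hθ' i
      split <;> simp [this]
    simp only [h1, Finset.sum_const_zero]
    linarith
  · push_neg at hc
    have h2 : ∑ i, θ' i * (if l i > l' i then (1 : ℝ) else 0) = ∑ i, θ' i := by
      apply Finset.sum_congr rfl
      intro i _
      rcases eq_or_ne (θ' i) 0 with h | h
      · simp [h]
      · have hle1 : l' i ≤ l' j0 := le_of_not_gt fun hh => h (hmin' i j0 hh)
        have : l i > l' i :=
          lt_of_le_of_lt hle1 (lt_of_lt_of_le hc (hi0 i (Finset.mem_univ i)))
        simp [this]
    have h1 : ∑ i, θ i * (if l i > l' i then (1 : ℝ) else 0) ≤ ∑ i, θ i := by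
      apply Finset.sum_le_sum
      intro i _
      have := hθ i
      split <;> simp [this]
    rw [hsum'] at h2
    rw [hsum] at h1
    linarith
end

section
/- Let C > 0 and let (g_n) be a sequence in Υ(C) converging pointwise to a function g: ℝ → ℝ. Then g ∈ Υ(C), and for every t not in the union of the discontinuity sets of the g_n⁻¹ and of g⁻¹, one has g_n⁻¹(t) → g⁻¹(t). -/
def UpsilonClass (C : ℝ) (g : ℝ → ℝ) : Prop :=
  Monotone g ∧ (∀ x y : ℝ, x ≤ y → g y - g x ≤ y - x) ∧
    ∀ x : ℝ, 0 ≤ g x - x ∧ g x - x ≤ C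

noncomputable def upsilonInv (g : ℝ → ℝ) (t : ℝ) : ℝ :=
  sSup {x : ℝ | g x = t}

lemma upsilon_continuous {C : ℝ} {h : ℝ → ℝ} (hh : UpsilonClass C h) : Continuous h := by
  have : LipschitzWith 1 h := by
    apply LipschitzWith.of_dist_le_mul
    intro x y
    rw [Real.dist_eq, Real.dist_eq, NNReal.coe_one, one_mul]
    rcases le_total x y with hxy | hxy
    · have h1 := hh.2.1 x y hxy
      have h2 : h x ≤ h y := hh.1 hxy
      rw [abs_sub_comm, abs_of_nonneg (by linarith), abs_of_nonpos (by linarith)]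
      linarith
    · have h1 := hh.2.1 y x hxy
      have h2 : h y ≤ h x := hh.1 hxy
      rw [abs_of_nonneg (by linarith), abs_of_nonneg (by linarith)]
      linarith
  exact this.continuous

lemma upsilon_apply_inv {C : ℝ} (hC : 0 < C) {h : ℝ → ℝ} (hh : UpsilonClass C h) (t : ℝ) :
    h (upsilonInv h t) = t := by
  have hcont := upsilon_continuous hh
  have hex : ∃ x ∈ Set.Icc (t - C) t, h x = t := by
    have h1 : h (t - C) ≤ t := by have := (hh.2.2 (t - C)).2; linarith
    have h2 : t ≤ h t := by have := (hh.2.2 t).1; linarith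
    exact intermediate_value_Icc (by linarith) hcont.continuousOn ⟨h1, h2⟩
  obtain ⟨x, _, hx⟩ := hex
  have hne : {x : ℝ | h x = t}.Nonempty := ⟨x, hx⟩
  have hbdd : BddAbove {x : ℝ | h x = t} := by
    refine ⟨t, fun y hy => ?_⟩
    have := (hh.2.2 y).1
    simp only [Set.mem_setOf_eq] at hy
    linarith
  have hcl : IsClosed {x : ℝ | h x = t} := isClosed_eq hcont continuous_const
  exact hcl.csSup_mem hne hbdd

lemma upsilon_le_inv_iff {C : ℝ} (hC : 0 < C) {h : ℝ → ℝ} (hh : UpsilonClass C h) (t x : ℝ) :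
    h x ≤ t ↔ x ≤ upsilonInv h t := by
  have happ := upsilon_apply_inv hC hh t
  constructor
  · intro hx
    by_contra hlt
    push_neg at hlt
    have := hh.1 hlt.le
    rw [happ] at this
    have : h x = t := le_antisymm hx this
    -- x is in the set, so x ≤ sSup
    have hbdd : BddAbove {y : ℝ | h y = t} := by
      refine ⟨t, fun y hy => ?_⟩
      have := (hh.2.2 y).1
      simp only [Set.mem_setOf_eq] at hy
      linarith
    have := le_csSup hbdd (by exact this : x ∈ {y : ℝ | h y = t})
    exact absurd this (not_le.mpr hlt)
  · intro hx
    have := hh.1 hx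
    rwa [happ] at this

theorem upsilon_pointwise_limit (C : ℝ) (hC : 0 < C)
    (gn : ℕ → ℝ → ℝ) (g : ℝ → ℝ)
    (hgn : ∀ n, UpsilonClass C (gn n))
    (hlim : ∀ x : ℝ, Filter.Tendsto (fun n => gn n x) Filter.atTop (nhds (g x))) :
    UpsilonClass C g ∧
      ∀ t : ℝ, ContinuousAt (upsilonInv g) t →
        (∀ n, ContinuousAt (upsilonInv (gn n)) t) →
        Filter.Tendsto (fun n => upsilonInv (gn n) t) Filter.atTop
          (nhds (upsilonInv g t)) := by
  have hgC : UpsilonClass C g := by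
    refine ⟨?_, ?_, ?_⟩
    · intro x y hxy
      exact le_of_tendsto_of_tendsto' (hlim x) (hlim y) fun n => (hgn n).1 hxy
    · intro x y hxy
      have : Filter.Tendsto (fun n => gn n y - gn n x) Filter.atTop (nhds (g y - g x)) :=
        (hlim y).sub (hlim x)
      exact le_of_tendsto this (.of_forall fun n => (hgn n).2.1 x y hxy)
    · intro x
      have : Filter.Tendsto (fun n => gn n x - x) Filter.atTop (nhds (g x - x)) :=
        (hlim x).sub tendsto_const_nhds
      exact ⟨ge_of_tendsto this (.of_forall fun n => ((hgn n).2.2 x).1),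
        le_of_tendsto this (.of_forall fun n => ((hgn n).2.2 x).2)⟩
  refine ⟨hgC, ?_⟩
  intro t hcont _
  rw [Metric.tendsto_atTop]
  intro ε hε
  obtain ⟨δ, hδ, hδ'⟩ := Metric.continuousAt_iff.mp hcont ε hε
  set xs := upsilonInv g t with hxs
  set y₁ := upsilonInv g (t - δ/2) with hy₁
  set y₂ := upsilonInv g (t + δ/2) with hy₂
  have hd1 : dist (t - δ/2) t < δ := by
    rw [Real.dist_eq]; rw [abs_of_nonpos (by linarith)]; linarith
  have hd2 : dist (t + δ/2) t < δ := by
    rw [Real.dist_eq]; rw [abs_of_nonneg (by linarith)]; linarith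
  have hb1 : xs - ε < y₁ := by
    have := hδ' hd1
    rw [Real.dist_eq, abs_lt] at this
    linarith [this.1]
  have hb2 : y₂ < xs + ε := by
    have := hδ' hd2
    rw [Real.dist_eq, abs_lt] at this
    linarith [this.2]
  have hg1 : g y₁ = t - δ/2 := upsilon_apply_inv hC hgC _
  have hg2 : g y₂ = t + δ/2 := upsilon_apply_inv hC hgC _
  have he1 : ∀ᶠ n in Filter.atTop, gn n y₁ < t := by
    apply (hlim y₁).eventually_lt_const
    rw [hg1]; linarith
  have he2 : ∀ᶠ n in Filter.atTop, t < gn n y₂ := by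
    apply (hlim y₂).eventually_const_lt
    rw [hg2]; linarith
  obtain ⟨N, hN⟩ := (he1.and he2).exists_forall_of_atTop
  refine ⟨N, fun n hn => ?_⟩
  obtain ⟨h1, h2⟩ := hN n hn
  have hl : y₁ ≤ upsilonInv (gn n) t :=
    (upsilon_le_inv_iff hC (hgn n) t y₁).mp h1.le
  have hr : upsilonInv (gn n) t < y₂ := by
    by_contra hc
    push_neg at hc
    have := (upsilon_le_inv_iff hC (hgn n) t y₂).mpr hc
    linarith
  rw [Real.dist_eq, abs_lt]
  constructor <;> linarith
end

section
/- Let H = ⟨V, E⟩ be a (possibly infinite) locally finite hypergraph, b: V → ℝ a baseload function, and let θ and θ' be two balanced allocations on H with respect to b, i.e. functions θ: {(e,i) : e ∈ E, i ∈ e} → [0,1] with Σ_{j∈e} θ(e,j) = 1 for every e, such that for all e ∈ E and i,j ∈ e, if ∂_b θ(i) > ∂_b θ(j) then θ(e,i) = 0 (where ∂_b θ(i) := b(i) + Σ_{e ∋ i} θ(e,i)), and similarly for θ'. If Σ_{i ∈ V} |∂_b θ(i) − ∂_b θ'(i)| < ∞, then ∂_b θ(i) = ∂_b θ'(i) for all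 i ∈ V. -/
/-- Total load at vertex `i` with baseload `b`: `b i` plus the sum of the loads
assigned to `i` by the edges containing `i`. -/
noncomputable def loadWith {V : Type*} (E : Set (Finset V)) (b : V → ℝ)
    (θ : Finset V → V → ℝ) (i : V) : ℝ :=
  b i + ∑' e : {e : Finset V // e ∈ E ∧ i ∈ e}, θ e.1 i

lemma loadWith_eq_sum {V : Type*} (E : Set (Finset V))
    (hloc : ∀ i : V, {e ∈ E | i ∈ e}.Finite) (b : V → ℝ)
    (θ : Finset V → V → ℝ) (i : V) :
    loadWith E b θ i = b i + ∑ e ∈ (hloc i).toFinset, θ e i := by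
  unfold loadWith
  congr 1
  haveI : Fintype {e : Finset V // e ∈ E ∧ i ∈ e} := (hloc i).fintype
  rw [tsum_fintype]
  exact (Finset.sum_subtype (hloc i).toFinset
    (fun e => by simp [Set.Finite.mem_toFinset]) (fun e => θ e i)).symm

lemma aux_le {V : Type*} (E : Set (Finset V))
    (hloc : ∀ i : V, {e ∈ E | i ∈ e}.Finite)
    (b : V → ℝ) (θ θ' : Finset V → V → ℝ)
    (hθ0 : ∀ e ∈ E, ∀ i ∈ e, 0 ≤ θ e i)
    (hθsum : ∀ e ∈ E, ∑ j ∈ e, θ e j = 1)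
    (hθ'0 : ∀ e ∈ E, ∀ i ∈ e, 0 ≤ θ' e i)
    (hθ'sum : ∀ e ∈ E, ∑ j ∈ e, θ' e j = 1)
    (hbal : ∀ e ∈ E, ∀ i ∈ e, ∀ j ∈ e,
      loadWith E b θ i > loadWith E b θ j → θ e i = 0)
    (hbal' : ∀ e ∈ E, ∀ i ∈ e, ∀ j ∈ e,
      loadWith E b θ' i > loadWith E b θ' j → θ' e i = 0)
    (hsummable : Summable fun i : V => |loadWith E b θ i - loadWith E b θ' i|) :
    ∀ i : V, loadWith E b θ i ≤ loadWith E b θ' i := by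
  classical
  set u : V → ℝ := loadWith E b θ with hu
  set u' : V → ℝ := loadWith E b θ' with hu'
  set D : V → ℝ := fun i => u i - u' i with hD
  by_contra hcon
  push_neg at hcon
  obtain ⟨i0, hi0⟩ := hcon
  have hd0 : 0 < D i0 := sub_pos.2 hi0
  -- the set where |D| ≥ D i0 is finite
  have hfin : {i : V | ¬ |D i| < D i0}.Finite := by
    have h1 : Filter.Tendsto (fun i => |D i|) Filter.cofinite (nhds 0) :=
      hsummable.tendsto_cofinite_zero
    have h2 : ∀ᶠ i in Filter.cofinite, |D i| < D i0 := h1 (gt_mem_nhds hd0)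
    simpa [Filter.eventually_cofinite] using h2
  set B : Finset V := hfin.toFinset with hB
  have hi0B : i0 ∈ B := by
    simp only [hB, Set.Finite.mem_toFinset, Set.mem_setOf_eq, not_lt]
    exact le_abs_self _
  -- maximum of D
  obtain ⟨istar, histar, hmax⟩ := B.exists_max_image D ⟨i0, hi0B⟩
  set m : ℝ := D istar with hm
  have hd0m : D i0 ≤ m := hmax i0 hi0B
  have hmpos : 0 < m := lt_of_lt_of_le hd0 hd0m
  have hglobal : ∀ k, D k ≤ m := by
    intro k
    by_cases hk : k ∈ B
    · exact hmax k hk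
    · simp only [hB, Set.Finite.mem_toFinset, Set.mem_setOf_eq, not_not] at hk
      exact le_trans (le_abs_self _) (le_trans hk.le hd0m)
  set S : Finset V := B.filter (fun i => D i = m) with hS
  have hmemS : ∀ i, i ∈ S ↔ D i = m := by
    intro i
    simp only [hS, Finset.mem_filter, and_iff_right_iff_imp]
    intro hDi
    simp only [hB, Set.Finite.mem_toFinset, Set.mem_setOf_eq, not_lt]
    calc D i0 ≤ m := hd0m
    _ = D i := hDi.symm
    _ ≤ |D i| := le_abs_self _
  have hSne : S.Nonempty := ⟨istar, (hmemS istar).2 rfl⟩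
  -- the finite set of edges meeting S
  set F : Finset (Finset V) := S.biUnion (fun i => (hloc i).toFinset) with hF
  have hFE : ∀ e ∈ F, e ∈ E := by
    intro e he
    simp only [hF, Finset.mem_biUnion, Set.Finite.mem_toFinset, Set.mem_setOf_eq] at he
    obtain ⟨j, _, hj, _⟩ := he
    exact hj
  have hDdecomp : ∀ i, D i = ∑ e ∈ (hloc i).toFinset, (θ e i - θ' e i) := by
    intro i
    simp only [hD, hu, hu', loadWith_eq_sum E hloc b θ i, loadWith_eq_sum E hloc b θ' i,
      Finset.sum_sub_distrib]
    ring
  -- per-edge claim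
  have hedge : ∀ e ∈ E, ∑ i ∈ S.filter (· ∈ e), (θ e i - θ' e i) ≤ 0 := by
    intro e he
    by_contra hpos
    push_neg at hpos
    have hTsum : ∑ i ∈ S.filter (· ∈ e), (θ e i - θ' e i)
        = ∑ i ∈ e.filter (· ∈ S), (θ e i - θ' e i) := by
      apply Finset.sum_congr _ (fun _ _ => rfl)
      ext i
      simp [Finset.mem_filter, and_comm]
    obtain ⟨i, hiT, hipos⟩ : ∃ i ∈ S.filter (· ∈ e), 0 < θ e i - θ' e i := by
      by_contra hall
      push_neg at hall
      exact absurd (Finset.sum_nonpos hall) (not_le.2 hpos)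
    have hiS : i ∈ S := (Finset.mem_filter.1 hiT).1
    have hie : i ∈ e := by
      have := (Finset.mem_filter.1 hiT).2; simpa using this
    have hsum0 : ∑ j ∈ e, (θ e j - θ' e j) = 0 := by
      rw [Finset.sum_sub_distrib, hθsum e he, hθ'sum e he]; ring
    have hsplit := Finset.sum_filter_add_sum_filter_not e (· ∈ S) (fun j => θ e j - θ' e j)
    have hT'neg : ∑ j ∈ e.filter (· ∉ S), (θ e j - θ' e j) < 0 := by
      rw [hTsum] at hpos
      rw [hsum0] at hsplit
      linarith
    obtain ⟨j, hjT', hjneg⟩ : ∃ j ∈ e.filter (· ∉ S), θ e j - θ' e j < 0 := by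
      by_contra hall
      push_neg at hall
      exact absurd (Finset.sum_nonneg hall) (not_le.2 hT'neg)
    have hje : j ∈ e := (Finset.mem_filter.1 hjT').1
    have hjS : j ∉ S := by
      have := (Finset.mem_filter.1 hjT').2; simpa using this
    -- θ e i > 0, θ' e j > 0
    have hθi : 0 < θ e i := lt_of_lt_of_le hipos (by linarith [hθ'0 e he i hie])
    have hθ'j : 0 < θ' e j := lt_of_lt_of_le (by linarith [hθ0 e he j hje]) le_rfl
    have huij : u i ≤ u j := by
      by_contra h
      push_neg at h
      exact absurd (hbal e he i hie j hje h) (ne_of_gt hθi)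
    have hu'ji : u' j ≤ u' i := by
      by_contra h
      push_neg at h
      exact absurd (hbal' e he j hje i hie h) (ne_of_gt hθ'j)
    have hDim : D i = m := (hmemS i).1 hiS
    have hDj : m ≤ D j := by
      simp only [hD] at hDim ⊢
      linarith
    exact hjS ((hmemS j).2 (le_antisymm (hglobal j) hDj))
  -- now the double counting
  have hkey : ∑ i ∈ S, D i = ∑ e ∈ F, ∑ i ∈ S.filter (· ∈ e), (θ e i - θ' e i) := by
    have h1 : ∀ i ∈ S, D i = ∑ e ∈ F.filter (fun e => i ∈ e), (θ e i - θ' e i) := by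
      intro i hiS
      rw [hDdecomp i]
      apply Finset.sum_congr _ (fun _ _ => rfl)
      ext e
      simp only [Set.Finite.mem_toFinset, Set.mem_setOf_eq, Finset.mem_filter, hF,
        Finset.mem_biUnion]
      constructor
      · rintro ⟨heE, hie⟩
        exact ⟨⟨i, hiS, heE, hie⟩, hie⟩
      · rintro ⟨⟨j, hjS, hj⟩, hie⟩
        exact ⟨hj.1, hie⟩
    rw [Finset.sum_congr rfl h1]
    simp_rw [Finset.sum_filter]
    exact Finset.sum_comm
  have hle : ∑ i ∈ S, D i ≤ 0 := by
    rw [hkey]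
    exact Finset.sum_nonpos (fun e he => hedge e (hFE e he))
  have hgt : 0 < ∑ i ∈ S, D i :=
    Finset.sum_pos (fun i hi => ((hmemS i).1 hi) ▸ hmpos) hSne
  linarith

theorem weak_uniqueness_of_balanced_allocations
    {V : Type*} [Countable V] (E : Set (Finset V))
    (hloc : ∀ i : V, {e ∈ E | i ∈ e}.Finite)
    (b : V → ℝ) (θ θ' : Finset V → V → ℝ)
    (hθ0 : ∀ e ∈ E, ∀ i ∈ e, 0 ≤ θ e i) (hθ1 : ∀ e ∈ E, ∀ i ∈ e, θ e i ≤ 1)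
    (hθsum : ∀ e ∈ E, ∑ j ∈ e, θ e j = 1)
    (hθ'0 : ∀ e ∈ E, ∀ i ∈ e, 0 ≤ θ' e i) (hθ'1 : ∀ e ∈ E, ∀ i ∈ e, θ' e i ≤ 1)
    (hθ'sum : ∀ e ∈ E, ∑ j ∈ e, θ' e j = 1)
    (hbal : ∀ e ∈ E, ∀ i ∈ e, ∀ j ∈ e,
      loadWith E b θ i > loadWith E b θ j → θ e i = 0)
    (hbal' : ∀ e ∈ E, ∀ i ∈ e, ∀ j ∈ e,
      loadWith E b θ' i > loadWith E b θ' j → θ' e i = 0)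
    (hsummable : Summable fun i : V => |loadWith E b θ i - loadWith E b θ' i|) :
    ∀ i : V, loadWith E b θ i = loadWith E b θ' i := by
  intro i
  exact le_antisymm
    (aux_le E hloc b θ θ' hθ0 hθsum hθ'0 hθ'sum hbal hbal' hsummable i)
    (aux_le E hloc b θ' θ hθ'0 hθ'sum hθ0 hθsum hbal' hbal
      (by simpa [abs_sub_comm] using hsummable) i)
end

section
/- Let T be a finite hypertree whose every edge has size c ≥ 2 and which has M ≥ 1 edges. Then T has exactly 1 + M(c−1) vertices, and there exists a balanced allocation θ on T (with zero baseload) under which every vertex receives total load exactly M/(1 + M(c−1)). -/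
/-- A closed path `i₀, e₁, i₁, …, eₙ, iₙ` (with `n ≥ 2`) in which the vertices
`i₁, …, iₙ` are distinct and the edges `e₁, …, eₙ` are distinct. -/
def HasClosedPath {V : Type*} (E : Finset (Finset V)) : Prop :=
  ∃ n : ℕ, 2 ≤ n ∧ ∃ v : Fin (n + 1) → V, ∃ e : Fin n → Finset V,
    (∀ k : Fin n, e k ∈ E) ∧
    (∀ k : Fin n, v k.castSucc ∈ e k ∧ v k.succ ∈ e k) ∧
    v 0 = v (Fin.last n) ∧
    Function.Injective (fun k : Fin n => v k.succ) ∧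
    Function.Injective e


set_option linter.unusedSectionVars false
set_option maxHeartbeats 1000000

namespace HTaux
open Classical

variable {V : Type*} [DecidableEq V]

/-- One step along an edge of `E`. -/
def Step (E : Finset (Finset V)) (a b : V) : Prop := ∃ ed ∈ E, a ∈ ed ∧ b ∈ ed

/-- Reachability. -/
def Reach (E : Finset (Finset V)) : V → V → Prop := Relation.ReflTransGen (Step E)

lemma Step.symm {E : Finset (Finset V)} {a b : V} (h : Step E a b) : Step E b a := by
  obtain ⟨ed, h1, h2, h3⟩ := h; exact ⟨ed, h1, h3, h2⟩

lemma Reach.symm {E : Finset (Finset V)} {a b : V} (h : Reach E a b) : Reach E b a :=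
  (@Relation.ReflTransGen.stdSymm V (Step E) ⟨fun _ _ h => Step.symm h⟩).symm _ _ h

lemma Reach.trans {E : Finset (Finset V)} {a b c : V} (h : Reach E a b) (h' : Reach E b c) :
    Reach E a c := Relation.ReflTransGen.trans h h'

lemma Step.reach {E : Finset (Finset V)} {a b : V} (h : Step E a b) : Reach E a b :=
  Relation.ReflTransGen.single h

/-- An indexed walk of length `n`. -/
def NWalk (E : Finset (Finset V)) (n : ℕ) (v : ℕ → V) (e : ℕ → Finset V) : Prop :=
  ∀ k < n, e k ∈ E ∧ v k ∈ e k ∧ v (k + 1) ∈ e k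

lemma reach_iff_walk {E : Finset (Finset V)} {a b : V} :
    Reach E a b ↔ ∃ n v e, NWalk E n v e ∧ v 0 = a ∧ v n = b := by
  constructor
  · intro h
    induction h with
    | refl => exact ⟨0, fun _ => a, fun _ => ∅, fun k hk => absurd hk (by omega), rfl, rfl⟩
    | @tail p q hr hstep ih =>
        obtain ⟨n, v, e, hw, h0, hn⟩ := ih
        obtain ⟨ed, hed, h1, h2⟩ := hstep
        refine ⟨n + 1, fun k => if k ≤ n then v k else q, fun k => if k < n then e k else ed,
          ?_, ?_, ?_⟩
        · intro k hk
          rcases lt_or_ge k n with h | h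
          · simpa [h, show k ≤ n by omega, show k + 1 ≤ n by omega] using hw k h
          · have hk' : k = n := by omega
            subst hk'
            simp only [lt_irrefl, if_false, le_refl, if_true, show ¬ (k+1 ≤ k) by omega]
            exact ⟨hed, hn ▸ h1, h2⟩
        · simpa using h0
        · simp
  · rintro ⟨n, v, e, hw, h0, hn⟩
    subst h0; subst hn
    induction n with
    | zero => exact Relation.ReflTransGen.refl
    | succ m ih =>
        have hm : Reach E (v 0) (v m) := ih (fun k hk => hw k (by omega))
        exact hm.tail ⟨e m, (hw m (by omega)).1, (hw m (by omega)).2⟩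

lemma NWalk.prefix {E : Finset (Finset V)} {n m : ℕ} {v : ℕ → V} {e : ℕ → Finset V}
    (hw : NWalk E n v e) (hm : m ≤ n) : NWalk E m v e :=
  fun k hk => hw k (by omega)

lemma NWalk.splice {E : Finset (Finset V)} {n : ℕ} {v : ℕ → V} {e : ℕ → Finset V}
    (hw : NWalk E n v e) {p q : ℕ} (hpq : p ≤ q) (hq : q < n) (hv : v p ∈ e q) :
    NWalk E (n - (q - p)) (fun k => if k ≤ p then v k else v (k + (q - p)))
      (fun k => if k < p then e k else e (k + (q - p))) ∧
    (fun k => if k ≤ p then v k else v (k + (q - p))) 0 = v 0 ∧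
    (fun k => if k ≤ p then v k else v (k + (q - p))) (n - (q - p)) = v n := by
  set d := q - p with hd
  refine ⟨?_, by simp, ?_⟩
  · intro k hk
    rcases lt_or_ge k p with h | h
    · have h1 : k ≤ p := by omega
      have h2 : k + 1 ≤ p := by omega
      simpa [h, h1, h2] using hw k (by omega)
    · have hkd : k + d < n := by omega
      have h1 : ¬ k < p := by omega
      have h2 : ¬ k + 1 ≤ p := by omega
      rcases eq_or_lt_of_le h with h3 | h3
      · have h4 : k ≤ p := by omega
        have : e (k + d) = e q := by rw [← h3]; congr 1; omega
        simp only [h1, if_false, h4, if_true, h2]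
        refine ⟨(hw (k+d) hkd).1, ?_, ?_⟩
        · rw [this, ← h3]; exact hv
        · have h5 : k + 1 + d = k + d + 1 := by omega
          rw [h5]; exact (hw (k+d) hkd).2.2
      · have h4 : ¬ k ≤ p := by omega
        simp only [h1, if_false, h4, h2, if_true]
        have h5 : k + 1 + d = k + d + 1 := by omega
        rw [h5]; exact hw (k + d) hkd
  · have h1 : ¬ n - d ≤ p := by omega
    have h2 : n - d + d = n := by omega
    simp [h1, h2]

lemma exists_min_walk {E : Finset (Finset V)} {a b : V} (h : Reach E a b) :
    ∃ n v e, NWalk E n v e ∧ v 0 = a ∧ v n = b ∧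
      (∀ p q, p ≤ n → q ≤ n → v p = v q → p = q) ∧
      (∀ p q, p < n → q < n → e p = e q → p = q) ∧
      (∀ k, k < n → v 0 ∈ e k → k = 0) := by
  have hex : ∃ m : ℕ, ∃ v e, NWalk E m v e ∧ v 0 = a ∧ v m = b := reach_iff_walk.mp h
  classical
  obtain ⟨v, e, hw, h0, hn⟩ := Nat.find_spec hex
  set n := Nat.find hex with hndef
  have hmin : ∀ m, m < n → ¬ ∃ v e, NWalk E m v e ∧ v 0 = a ∧ v m = b :=
    fun m hm => Nat.find_min hex hm
  refine ⟨n, v, e, hw, h0, hn, ?_, ?_, ?_⟩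
  · intro p q hp hq hv
    by_contra hne
    wlog hpq : p < q generalizing p q
    · exact this q p hq hp hv.symm (Ne.symm hne) (by omega)
    rcases eq_or_lt_of_le hq with h3 | h3
    · exact hmin p (by omega) ⟨v, e, hw.prefix (by omega), h0, by rw [hv, h3, hn]⟩
    · have hvq : v p ∈ e q := hv ▸ (hw q h3).2.1
      obtain ⟨hw', h0', hn'⟩ := hw.splice (le_of_lt hpq) h3 hvq
      exact hmin (n - (q - p)) (by omega) ⟨_, _, hw', h0'.trans h0, hn'.trans hn⟩
  · intro p q hp hq he
    by_contra hne
    wlog hpq : p < q generalizing p q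
    · exact this q p hq hp he.symm (Ne.symm hne) (by omega)
    have hvq : v p ∈ e q := he ▸ (hw p hp).2.1
    obtain ⟨hw', h0', hn'⟩ := hw.splice (le_of_lt hpq) hq hvq
    exact hmin (n - (q - p)) (by omega) ⟨_, _, hw', h0'.trans h0, hn'.trans hn⟩
  · intro k hk hv0
    by_contra hne
    obtain ⟨hw', h0', hn'⟩ := hw.splice (Nat.zero_le k) hk hv0
    exact hmin (n - (k - 0)) (by omega) ⟨_, _, hw', h0'.trans h0, hn'.trans hn⟩


lemma key {E : Finset (Finset V)} (htree : ¬ HasClosedPath E) {ed : Finset V} (hed : ed ∈ E)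
    {i j : V} (hi : i ∈ ed) (hj : j ∈ ed) (hij : i ≠ j)
    (hr : Reach (E.erase ed) i j) : False := by
  obtain ⟨n, v, e, hw, h0, hn, hinjv, hinje, _⟩ := exists_min_walk hr
  have hn1 : 1 ≤ n := by
    rcases Nat.eq_zero_or_pos n with h | h
    · exact absurd (h0.symm.trans (h ▸ hn)) hij
    · exact h
  apply htree
  refine ⟨n + 1, by omega, fun k => if (k : ℕ) ≤ n then v (k : ℕ) else i,
    fun k => if (k : ℕ) < n then e (k : ℕ) else ed, ?_, ?_, ?_, ?_, ?_⟩
  · intro k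
    by_cases h : (k : ℕ) < n
    · simpa [h] using Finset.mem_of_mem_erase (hw k h).1
    · simpa [h] using hed
  · intro k
    have hkc : ((k.castSucc : Fin (n + 2)) : ℕ) = (k : ℕ) := rfl
    have hks : ((k.succ : Fin (n + 2)) : ℕ) = (k : ℕ) + 1 := rfl
    have hk : (k : ℕ) ≤ n := by omega
    by_cases h : (k : ℕ) < n
    · have h1 : (k : ℕ) + 1 ≤ n := by omega
      simp only [hkc, hks, hk, h, if_true, h1]
      exact ⟨(hw k h).2.1, (hw k h).2.2⟩
    · have hkn : (k : ℕ) = n := by omega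
      simp only [hkc, hks, hk, h, if_true, if_false, show ¬ ((k:ℕ)+1 ≤ n) by omega]
      rw [hkn, hn]
      exact ⟨hj, hi⟩
  · have h1 : ((0 : Fin (n + 2)) : ℕ) = 0 := rfl
    have h2 : ((Fin.last (n + 1)) : ℕ) = n + 1 := rfl
    simp only [h1, h2, Nat.zero_le, if_true, show ¬ (n + 1 ≤ n) by omega, if_false]
    rw [h0]
  · intro k l hkl
    have hks : ((k.succ : Fin (n + 2)) : ℕ) = (k : ℕ) + 1 := rfl
    have hls : ((l.succ : Fin (n + 2)) : ℕ) = (l : ℕ) + 1 := rfl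
    have hk := k.isLt
    have hl := l.isLt
    simp only [hks, hls] at hkl
    by_cases h : (k : ℕ) + 1 ≤ n <;> by_cases h' : (l : ℕ) + 1 ≤ n <;>
      simp only [h, h', if_true, if_false] at hkl
    · exact Fin.ext (by have := hinjv _ _ h h' hkl; omega)
    · have := hinjv ((k : ℕ) + 1) 0 h (by omega) (by rw [hkl, h0]); omega
    · have := hinjv 0 ((l : ℕ) + 1) (by omega) h' (by rw [← hkl, h0]); omega
    · exact Fin.ext (by omega)
  · intro k l hkl
    have hk := k.isLt
    have hl := l.isLt
    replace hkl : (if (k:ℕ) < n then e (k:ℕ) else ed) = (if (l:ℕ) < n then e (l:ℕ) else ed) := hkl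
    by_cases h : (k : ℕ) < n <;> by_cases h' : (l : ℕ) < n <;>
      simp only [h, h', if_true, if_false] at hkl
    · exact Fin.ext (hinje _ _ h h' hkl)
    · exact absurd hkl (Finset.ne_of_mem_erase (hw k h).1)
    · exact absurd hkl.symm (Finset.ne_of_mem_erase (hw l h').1)
    · exact Fin.ext (by omega)

/-- From any vertex reaching a vertex of `ed`, one can reach some vertex of `ed`
avoiding `ed` itself. -/
lemma reach_to_edge {E : Finset (Finset V)} {ed : Finset V} {a w : V} (hw : w ∈ ed)
    (h : Reach E a w) : ∃ i ∈ ed, Reach (E.erase ed) a i := by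
  induction h using Relation.ReflTransGen.head_induction_on with
  | refl => exact ⟨w, hw, Relation.ReflTransGen.refl⟩
  | head hstep _ ih =>
      obtain ⟨g, hg, h1, h2⟩ := hstep
      obtain ⟨i, hi, hri⟩ := ih
      by_cases hge : g = ed
      · exact ⟨_, hge ▸ h1, Relation.ReflTransGen.refl⟩
      · exact ⟨i, hi, Relation.ReflTransGen.head ⟨g, Finset.mem_erase.mpr ⟨hge, hg⟩, h1, h2⟩ hri⟩

/-- For `x ≠ y` in a hypertree, there is a unique edge containing `x` which separates
`x` from `y`. -/
lemma exists_unique_sep {E : Finset (Finset V)} (htree : ¬ HasClosedPath E) {x y : V}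
    (hxy : x ≠ y) (hr : Reach E x y) :
    ∃! ed, ed ∈ E ∧ x ∈ ed ∧ ¬ Reach (E.erase ed) x y := by
  obtain ⟨n, v, e, hw, h0, hn, hinjv, hinje, hfirst⟩ := exists_min_walk hr
  have hn1 : 1 ≤ n := by
    rcases Nat.eq_zero_or_pos n with h | h
    · exact absurd (h0.symm.trans (h ▸ hn)) hxy
    · exact h
  have he0 : e 0 ∈ E := (hw 0 hn1).1
  have hx0 : x ∈ e 0 := h0 ▸ (hw 0 hn1).2.1
  -- any other edge containing x does not separate
  have hother : ∀ g, g ∈ E → x ∈ g → g ≠ e 0 → Reach (E.erase g) x y := by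
    intro g hgE hxg hge
    have hWa : NWalk (E.erase g) n v e := by
      intro k hk
      refine ⟨Finset.mem_erase.mpr ⟨?_, (hw k hk).1⟩, (hw k hk).2.1, (hw k hk).2.2⟩
      intro hkg
      exact hge ((hfirst k hk (hkg ▸ (h0.symm ▸ hxg))) ▸ hkg.symm ▸ rfl)
    exact reach_iff_walk.mpr ⟨n, v, e, hWa, h0, hn⟩
  -- the first edge separates
  have hsep : ¬ Reach (E.erase (e 0)) x y := by
    intro hRe
    have htail : NWalk (E.erase (e 0)) (n - 1) (fun k => v (k + 1)) (fun k => e (k + 1)) := by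
      intro k hk
      refine ⟨Finset.mem_erase.mpr ⟨?_, (hw (k+1) (by omega)).1⟩,
        (hw (k+1) (by omega)).2.1, (hw (k+1) (by omega)).2.2⟩
      intro hke
      have hke' : e (k + 1) = e 0 := hke
      have hm : v 0 ∈ e (k + 1) := by rw [hke']; exact (hw 0 hn1).2.1
      have : k + 1 = 0 := hfirst (k+1) (by omega) hm
      omega
    have hr1 : Reach (E.erase (e 0)) (v 1) y :=
      reach_iff_walk.mpr ⟨n - 1, _, _, htail, rfl, by
        show v (n - 1 + 1) = y
        rw [show n - 1 + 1 = n by omega, hn]⟩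
    have hx1 : Reach (E.erase (e 0)) x (v 1) := hRe.trans hr1.symm
    have hne : x ≠ v 1 := by
      intro hh
      have := hinjv 0 1 (by omega) (by omega) (h0.trans hh)
      omega
    exact key htree he0 hx0 (hw 0 hn1).2.2 hne hx1
  refine ⟨e 0, ⟨he0, hx0, hsep⟩, ?_⟩
  rintro g ⟨hgE, hxg, hgsep⟩
  by_contra hge
  exact hgsep (hother g hgE hxg hge)

end HTaux

theorem hypertree_uniform_balanced_allocation
    {V : Type*} [Fintype V] [DecidableEq V]
    (c M : ℕ) (hc : 2 ≤ c) (hM : 1 ≤ M)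
    (E : Finset (Finset V)) (hcard : E.card = M)
    (hsize : ∀ e ∈ E, e.card = c)
    (htree : ¬ HasClosedPath E)
    (hconn : ∀ u w : V,
      Relation.ReflTransGen (fun a b => ∃ ed ∈ E, a ∈ ed ∧ b ∈ ed) u w) :
    Fintype.card V = 1 + M * (c - 1) ∧
      ∃ θ : Finset V → V → ℝ,
        (∀ e ∈ E, ∀ i ∈ e, 0 ≤ θ e i) ∧
        (∀ e ∈ E, ∑ i ∈ e, θ e i = 1) ∧
        (∀ e ∈ E, ∀ i ∈ e, ∀ j ∈ e,
          (∑ f ∈ E.filter (fun f => i ∈ f), θ f i) >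
              (∑ f ∈ E.filter (fun f => j ∈ f), θ f j) → θ e i = 0) ∧
        ∀ v : V, (∑ f ∈ E.filter (fun f => v ∈ f), θ f v) =
          (M : ℝ) / (1 + (M : ℝ) * ((c : ℝ) - 1)) := by
  classical
  have hconn' : ∀ u w : V, HTaux.Reach E u w := hconn
  -- basic nonemptiness
  have hE0 : E.Nonempty := Finset.card_pos.mp (by omega)
  obtain ⟨e₀, he₀⟩ := hE0
  have hene : ∀ e ∈ E, e.Nonempty := fun e he =>
    Finset.card_pos.mp (by rw [hsize e he]; omega)
  obtain ⟨r, hrmem⟩ := hene e₀ he₀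
  -- unique contact vertex of an edge towards any target
  have hcontact : ∀ e ∈ E, ∀ t : V, ∃ i ∈ e, HTaux.Reach (E.erase e) i t := by
    intro e he t
    obtain ⟨w, hw⟩ := hene e he
    obtain ⟨i, hi, hri⟩ := HTaux.reach_to_edge hw (hconn' t w)
    exact ⟨i, hi, hri.symm⟩
  have hunique : ∀ e ∈ E, ∀ t : V, ∀ i ∈ e, ∀ j ∈ e,
      HTaux.Reach (E.erase e) i t → HTaux.Reach (E.erase e) j t → i = j := by
    intro e he t i hi j hj h1 h2
    by_contra hne
    exact HTaux.key htree he hi hj hne (h1.trans h2.symm)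
  ---- PART 1 : counting vertices
  have hfib : ∀ e ∈ E,
      (e.filter (fun v => ¬ HTaux.Reach (E.erase e) v r)).card = c - 1 := by
    intro e he
    obtain ⟨i, hi, hri⟩ := hcontact e he r
    have hpos : e.filter (fun v => HTaux.Reach (E.erase e) v r) = {i} := by
      ext z
      simp only [Finset.mem_filter, Finset.mem_singleton]
      constructor
      · rintro ⟨hz, hrz⟩
        exact hunique e he r z hz i hi hrz hri
      · rintro rfl
        exact ⟨hi, hri⟩
    have hsum := Finset.card_filter_add_card_filter_not
      (s := e) (p := fun v => HTaux.Reach (E.erase e) v r)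
    rw [hsize e he, hpos] at hsum
    simp only [Finset.card_singleton] at hsum
    omega
  have hdisj : ∀ e ∈ E, ∀ f ∈ E, e ≠ f →
      Disjoint (e.filter (fun v => ¬ HTaux.Reach (E.erase e) v r))
        (f.filter (fun v => ¬ HTaux.Reach (E.erase f) v r)) := by
    intro e he f hf hef
    rw [Finset.disjoint_left]
    intro v hv1 hv2
    rw [Finset.mem_filter] at hv1 hv2
    have hvr : v ≠ r := by
      intro h
      exact hv1.2 (h ▸ Relation.ReflTransGen.refl)
    obtain ⟨ed, _, hu⟩ := HTaux.exists_unique_sep htree hvr (hconn' v r)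
    have h1 : e = ed := hu e ⟨he, hv1.1, hv1.2⟩
    have h2 : f = ed := hu f ⟨hf, hv2.1, hv2.2⟩
    exact hef (h1.trans h2.symm)
  have hcover : (Finset.univ : Finset V).erase r =
      E.biUnion (fun e => e.filter (fun v => ¬ HTaux.Reach (E.erase e) v r)) := by
    ext v
    simp only [Finset.mem_erase, Finset.mem_univ, and_true, Finset.mem_biUnion,
      Finset.mem_filter]
    constructor
    · intro hvr
      obtain ⟨ed, ⟨hedE, hved, hsep⟩, _⟩ := HTaux.exists_unique_sep htree hvr (hconn' v r)
      exact ⟨ed, hedE, hved, hsep⟩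
    · rintro ⟨ed, _, _, hsep⟩
      intro h
      exact hsep (h ▸ Relation.ReflTransGen.refl)
  have hA : Fintype.card V = 1 + M * (c - 1) := by
    have h1 := Finset.card_erase_add_one (Finset.mem_univ r)
    have h2 : (Finset.univ.erase r).card = M * (c - 1) := by
      rw [hcover, Finset.card_biUnion hdisj]
      rw [Finset.sum_congr rfl (fun e he => hfib e he), Finset.sum_const, hcard,
        smul_eq_mul]
    rw [← Finset.card_univ, ← h1, h2]
    omega
  ---- PART 2 : the allocation
  set Nr : ℝ := 1 + (M : ℝ) * ((c : ℝ) - 1) with hNrdef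
  have hc' : (2 : ℝ) ≤ (c : ℝ) := by exact_mod_cast hc
  have hM' : (1 : ℝ) ≤ (M : ℝ) := by exact_mod_cast hM
  have hNrpos : 0 < Nr := by rw [hNrdef]; nlinarith
  set m : Finset V → V → ℕ := fun f i =>
    ((E.erase f).filter (fun g => ∃ x ∈ g, HTaux.Reach (E.erase f) x i)).card with hmdef
  set θ : Finset V → V → ℝ := fun f i =>
    if f ∈ E ∧ i ∈ f then ((M : ℝ) - m f i) / Nr else 0 with hθdef
  -- m is at most M - 1
  have hm_le : ∀ f ∈ E, ∀ i : V, m f i ≤ M - 1 := by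
    intro f hf i
    calc m f i ≤ (E.erase f).card := Finset.card_filter_le _ _
      _ = M - 1 := by rw [Finset.card_erase_of_mem hf, hcard]
  -- the per-edge sum of m
  have hedge_sum : ∀ e ∈ E, ∑ i ∈ e, m e i = M - 1 := by
    intro e he
    have hdis : ∀ i ∈ e, ∀ j ∈ e, i ≠ j →
        Disjoint ((E.erase e).filter (fun g => ∃ x ∈ g, HTaux.Reach (E.erase e) x i))
          ((E.erase e).filter (fun g => ∃ x ∈ g, HTaux.Reach (E.erase e) x j)) := by
      intro i hi j hj hij
      rw [Finset.disjoint_left]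
      intro g hg1 hg2
      rw [Finset.mem_filter] at hg1 hg2
      obtain ⟨hgmem, x, hx, hrx⟩ := hg1
      obtain ⟨_, y, hy, hry⟩ := hg2
      have hstep : HTaux.Step (E.erase e) x y := ⟨g, hgmem, hx, hy⟩
      exact HTaux.key htree he hi hj hij (hrx.symm.trans (hstep.reach.trans hry))
    have hbu : e.biUnion
        (fun i => (E.erase e).filter (fun g => ∃ x ∈ g, HTaux.Reach (E.erase e) x i)) =
        E.erase e := by
      ext g
      simp only [Finset.mem_biUnion, Finset.mem_filter]
      constructor
      · rintro ⟨i, _, hg, _⟩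
        exact hg
      · intro hg
        obtain ⟨x, hx⟩ := hene g (Finset.mem_of_mem_erase hg)
        obtain ⟨w, hw⟩ := hene e he
        obtain ⟨i, hi, hri⟩ := HTaux.reach_to_edge hw (hconn' x w)
        exact ⟨i, hi, hg, x, hx, hri⟩
    have := Finset.card_biUnion hdis
    rw [hbu, Finset.card_erase_of_mem he, hcard] at this
    exact this.symm
  -- the per-vertex sum of m
  have hcard2 : 2 ≤ Fintype.card V := by
    rw [hA]
    have : 1 ≤ c - 1 := by omega
    nlinarith
  have hdeg : ∀ v : V, 1 ≤ (E.filter (fun f => v ∈ f)).card := by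
    intro v
    obtain ⟨u, hu⟩ := Fintype.exists_ne_of_one_lt_card (by omega) v
    rcases (hconn' v u).cases_head with h | ⟨b, hstep, _⟩
    · exact absurd h.symm hu
    · obtain ⟨ed, hed, hved, _⟩ := hstep
      refine Finset.card_pos.mpr ⟨ed, Finset.mem_filter.mpr ⟨hed, hved⟩⟩
  have hvert_sum : ∀ v : V,
      ∑ f ∈ E.filter (fun f => v ∈ f), m f v =
        M * ((E.filter (fun f => v ∈ f)).card - 1) := by
    intro v
    set D := E.filter (fun f => v ∈ f) with hDdef
    have hDmem : ∀ f, f ∈ D ↔ f ∈ E ∧ v ∈ f := by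
      intro f; rw [hDdef, Finset.mem_filter]
    have step1 : ∀ f ∈ D, m f v =
        ∑ g ∈ E, if g ≠ f ∧ ∃ x ∈ g, HTaux.Reach (E.erase f) x v then 1 else 0 := by
      intro f hf
      rw [hmdef]
      simp only
      rw [← Finset.filter_ne' E f, Finset.filter_filter, Finset.card_filter]
    rw [Finset.sum_congr rfl step1, Finset.sum_comm]
    have step2 : ∀ g ∈ E,
        (∑ f ∈ D, if g ≠ f ∧ ∃ x ∈ g, HTaux.Reach (E.erase f) x v then 1 else 0) =
          D.card - 1 := by
      intro g hg
      rw [← Finset.card_filter]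
      by_cases hvg : v ∈ g
      · have : D.filter (fun f => g ≠ f ∧ ∃ x ∈ g, HTaux.Reach (E.erase f) x v) =
            D.erase g := by
          ext f
          simp only [Finset.mem_filter, Finset.mem_erase]
          constructor
          · rintro ⟨hfD, hgf, _⟩
            exact ⟨Ne.symm hgf, hfD⟩
          · rintro ⟨hfg, hfD⟩
            exact ⟨hfD, Ne.symm hfg, v, hvg, Relation.ReflTransGen.refl⟩
        rw [this, Finset.card_erase_of_mem ((hDmem g).mpr ⟨hg, hvg⟩)]
      · obtain ⟨x₀, hx₀⟩ := hene g hg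
        have hvx₀ : v ≠ x₀ := fun h => hvg (h ▸ hx₀)
        obtain ⟨ed, ⟨hedE, hved, hsep⟩, hu⟩ :=
          HTaux.exists_unique_sep htree hvx₀ (hconn' v x₀)
        have hkey : ∀ f ∈ D, ((∃ x ∈ g, HTaux.Reach (E.erase f) x v) ↔
            HTaux.Reach (E.erase f) v x₀) := by
          intro f hf
          obtain ⟨hfE, hvf⟩ := (hDmem f).mp hf
          have hgf : g ≠ f := fun h => hvg (h ▸ hvf)
          have hgmem : g ∈ E.erase f := Finset.mem_erase.mpr ⟨hgf, hg⟩
          constructor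
          · rintro ⟨x, hx, hrx⟩
            have hstep : HTaux.Step (E.erase f) x₀ x := ⟨g, hgmem, hx₀, hx⟩
            exact (hstep.reach.trans hrx).symm
          · intro hrv
            exact ⟨x₀, hx₀, hrv.symm⟩
        have : D.filter (fun f => g ≠ f ∧ ∃ x ∈ g, HTaux.Reach (E.erase f) x v) =
            D.erase ed := by
          ext f
          simp only [Finset.mem_filter, Finset.mem_erase]
          constructor
          · rintro ⟨hfD, _, hC⟩
            refine ⟨?_, hfD⟩
            intro hfed
            exact hsep (hfed ▸ ((hkey f hfD).mp hC))
          · rintro ⟨hfed, hfD⟩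
            obtain ⟨hfE, hvf⟩ := (hDmem f).mp hfD
            have hgf : g ≠ f := fun h => hvg (h ▸ hvf)
            refine ⟨hfD, hgf, (hkey f hfD).mpr ?_⟩
            by_contra hn
            exact hfed (hu f ⟨hfE, hvf, hn⟩)
        rw [this, Finset.card_erase_of_mem ((hDmem ed).mpr ⟨hedE, hved⟩)]
    rw [Finset.sum_congr rfl step2, Finset.sum_const, hcard, smul_eq_mul]
  -- the loads
  have hload : ∀ v : V, (∑ f ∈ E.filter (fun f => v ∈ f), θ f v) = (M : ℝ) / Nr := by
    intro v
    set D := E.filter (fun f => v ∈ f) with hDdef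
    have hθv : ∀ f ∈ D, θ f v = ((M : ℝ) - m f v) / Nr := by
      intro f hf
      rw [hDdef, Finset.mem_filter] at hf
      rw [hθdef]
      simp only [if_pos (And.intro hf.1 hf.2)]
    rw [Finset.sum_congr rfl hθv, ← Finset.sum_div]
    congr 1
    rw [Finset.sum_sub_distrib, Finset.sum_const, nsmul_eq_mul, mul_comm]
    have hms : (∑ f ∈ D, (m f v : ℝ)) = (M : ℝ) * ((D.card : ℝ) - 1) := by
      rw [← Nat.cast_sum]
      rw [hvert_sum v, ← hDdef]
      have h1 : 1 ≤ D.card := hdeg v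
      push_cast [h1]
      ring
    rw [hms]
    ring
  refine ⟨hA, θ, ?_, ?_, ?_, ?_⟩
  · -- nonnegativity
    intro e he i hi
    rw [hθdef]
    simp only [if_pos (And.intro he hi)]
    apply div_nonneg _ (le_of_lt hNrpos)
    have h1 : m e i ≤ M - 1 := hm_le e he i
    have h2 : (m e i : ℝ) ≤ (M : ℝ) - 1 := by
      have h3 : ((M - 1 : ℕ) : ℝ) = (M : ℝ) - 1 := by push_cast [hM]; ring
      calc (m e i : ℝ) ≤ ((M - 1 : ℕ) : ℝ) := by exact_mod_cast h1
        _ = (M : ℝ) - 1 := h3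
    linarith
  · -- edge sums
    intro e he
    have hθe : ∀ i ∈ e, θ e i = ((M : ℝ) - m e i) / Nr := by
      intro i hi
      rw [hθdef]
      simp only [if_pos (And.intro he hi)]
    rw [Finset.sum_congr rfl hθe, ← Finset.sum_div]
    rw [Finset.sum_sub_distrib, Finset.sum_const, nsmul_eq_mul, hsize e he]
    have hms : (∑ i ∈ e, (m e i : ℝ)) = (M : ℝ) - 1 := by
      rw [← Nat.cast_sum, hedge_sum e he]
      push_cast [hM]
      ring
    rw [hms]
    have hnum : (c : ℝ) * (M : ℝ) - ((M : ℝ) - 1) = Nr := by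
      rw [hNrdef]; ring
    rw [hnum, div_self (ne_of_gt hNrpos)]
  · -- balancedness
    intro e he i hi j hj hgt
    rw [hload i, hload j] at hgt
    exact absurd hgt (lt_irrefl _)
  · -- uniform loads
    intro v
    rw [hload v]
end

section
/- Let H be a finite hypergraph and θ a balanced allocation on H (with zero baseload). Then the maximum total load equals the maximum edge density over nonempty subgraphs: max_{v ∈ V(H)} ∂θ(v) = max_{∅ ≠ S ⊆ V(H)} |E_H(S)| / |S|, where E_H(S) is the set of edges of H with all endpoints in S. -/
theorem max_load_eq_max_edge_density
    {V : Type*} [Fintype V] [DecidableEq V] [Nonempty V]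
    (E : Finset (Finset V)) (θ : Finset V → V → ℝ)
    (hθ0 : ∀ e ∈ E, ∀ i ∈ e, 0 ≤ θ e i)
    (hθsum : ∀ e ∈ E, ∑ i ∈ e, θ e i = 1)
    (hbal : ∀ e ∈ E, ∀ i ∈ e, ∀ j ∈ e,
      (∑ f ∈ E.filter (fun f => i ∈ f), θ f i) >
          (∑ f ∈ E.filter (fun f => j ∈ f), θ f j) → θ e i = 0) :
    sSup (Set.range fun v : V => ∑ f ∈ E.filter (fun f => v ∈ f), θ f v) =
      sSup {x : ℝ | ∃ S : Finset V, S.Nonempty ∧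
        x = ((E.filter fun e => e ⊆ S).card : ℝ) / (S.card : ℝ)} := by
  classical
  set D : V → ℝ := fun v => ∑ f ∈ E.filter (fun f => v ∈ f), θ f v with hD
  obtain ⟨v₀, -, hv₀⟩ := Finset.exists_max_image Finset.univ D
    ⟨Classical.arbitrary V, Finset.mem_univ _⟩
  set M := D v₀ with hM
  have hub : ∀ v, D v ≤ M := fun v => hv₀ v (Finset.mem_univ v)
  set S : Finset V := Finset.univ.filter (fun v => D v = M) with hS
  have hv₀S : v₀ ∈ S := by simp [hS, hM]
  have hSne : S.Nonempty := ⟨v₀, hv₀S⟩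
  -- double counting
  have hdc : ∀ T : Finset V,
      ∑ v ∈ T, D v = ∑ f ∈ E, ∑ v ∈ T.filter (fun v => v ∈ f), θ f v := by
    intro T
    calc ∑ v ∈ T, D v
        = ∑ v ∈ T, ∑ f ∈ E, if v ∈ f then θ f v else 0 := by
          simp [hD, Finset.sum_filter]
      _ = ∑ f ∈ E, ∑ v ∈ T, if v ∈ f then θ f v else 0 := Finset.sum_comm
      _ = ∑ f ∈ E, ∑ v ∈ T.filter (fun v => v ∈ f), θ f v := by
          simp [Finset.sum_filter]
  -- lower bound: number of edges inside T is at most the total load on T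
  have hlow : ∀ T : Finset V,
      ((E.filter fun e => e ⊆ T).card : ℝ) ≤ ∑ v ∈ T, D v := by
    intro T
    rw [hdc T]
    have h1 : ((E.filter fun e => e ⊆ T).card : ℝ)
        = ∑ f ∈ E.filter (fun e => e ⊆ T), ∑ v ∈ T.filter (fun v => v ∈ f), θ f v := by
      rw [Finset.card_eq_sum_ones, Nat.cast_sum]
      refine Finset.sum_congr rfl fun f hf => ?_
      obtain ⟨hfE, hfT⟩ := Finset.mem_filter.mp hf
      have : T.filter (fun v => v ∈ f) = f := by
        ext v; simp only [Finset.mem_filter]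
        exact ⟨fun h => h.2, fun h => ⟨hfT h, h⟩⟩
      rw [this, hθsum f hfE]; norm_num
    rw [h1]
    refine Finset.sum_le_sum_of_subset_of_nonneg (Finset.filter_subset _ _) ?_
    intro f hf _
    exact Finset.sum_nonneg fun v hv =>
      hθ0 f hf v (Finset.mem_filter.mp hv).2
  -- exact count on the argmax set S
  have hkey : ∀ f ∈ E, ∑ v ∈ S.filter (fun v => v ∈ f), θ f v
      = if f ⊆ S then 1 else 0 := by
    intro f hf
    by_cases hfS : f ⊆ S
    · have : S.filter (fun v => v ∈ f) = f := by
        ext v; simp only [Finset.mem_filter]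
        exact ⟨fun h => h.2, fun h => ⟨hfS h, h⟩⟩
      rw [this, hθsum f hf, if_pos hfS]
    · rw [if_neg hfS]
      obtain ⟨j, hjf, hjS⟩ := Finset.not_subset.mp hfS
      have hjM : D j < M := by
        have : D j ≠ M := by simpa [hS] using hjS
        exact lt_of_le_of_ne (hub j) this
      refine Finset.sum_eq_zero fun i hi => ?_
      obtain ⟨hiS, hif⟩ := Finset.mem_filter.mp hi
      have hiM : D i = M := (Finset.mem_filter.mp hiS).2
      have : D j < D i := by rw [hiM]; exact hjM
      exact hbal f hf i hif j hjf this
  have hcount : ∑ v ∈ S, D v = ((E.filter fun e => e ⊆ S).card : ℝ) := by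
    rw [hdc S, Finset.sum_congr rfl hkey]
    simp [Finset.sum_boole]
  have hsumS : ∑ v ∈ S, D v = M * S.card := by
    rw [Finset.sum_congr rfl (fun v hv => (Finset.mem_filter.mp hv).2)]
    rw [Finset.sum_const, nsmul_eq_mul, mul_comm]
  have hScard : (0 : ℝ) < S.card := by
    exact_mod_cast Finset.card_pos.mpr hSne
  -- both sides equal M
  have h1 : IsGreatest (Set.range fun v : V =>
      ∑ f ∈ E.filter (fun f => v ∈ f), θ f v) M :=
    ⟨⟨v₀, rfl⟩, by rintro x ⟨v, rfl⟩; exact hub v⟩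
  have h2 : IsGreatest {x : ℝ | ∃ S : Finset V, S.Nonempty ∧
      x = ((E.filter fun e => e ⊆ S).card : ℝ) / (S.card : ℝ)} M := by
    constructor
    · refine ⟨S, hSne, ?_⟩
      rw [← hcount, hsumS, mul_div_assoc, div_self (ne_of_gt hScard), mul_one]
    · rintro x ⟨T, hTne, rfl⟩
      have hTcard : (0 : ℝ) < T.card := by
        exact_mod_cast Finset.card_pos.mpr hTne
      rw [div_le_iff₀ hTcard]
      calc ((E.filter fun e => e ⊆ T).card : ℝ) ≤ ∑ v ∈ T, D v := hlow T
        _ ≤ ∑ _v ∈ T, M := Finset.sum_le_sum fun v _ => hub v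
        _ = M * T.card := by rw [Finset.sum_const, nsmul_eq_mul, mul_comm]
  rw [h1.csSup_eq, h2.csSup_eq]
end

section
/- Let H be a finite hypergraph, b: V(H) → ℝ a baseload, and suppose θ and θ' are both balanced allocations on H with respect to b. Then ∂_b θ(i) = ∂_b θ'(i) for all i ∈ V(H). -/
theorem balanced_load_unique_finite
    {V : Type*} [Fintype V] [DecidableEq V]
    (E : Finset (Finset V)) (b : V → ℝ) (θ θ' : Finset V → V → ℝ)
    (hθ0 : ∀ e ∈ E, ∀ i ∈ e, 0 ≤ θ e i) (hθ1 : ∀ e ∈ E, ∀ i ∈ e, θ e i ≤ 1)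
    (hθsum : ∀ e ∈ E, ∑ i ∈ e, θ e i = 1)
    (hθ'0 : ∀ e ∈ E, ∀ i ∈ e, 0 ≤ θ' e i) (hθ'1 : ∀ e ∈ E, ∀ i ∈ e, θ' e i ≤ 1)
    (hθ'sum : ∀ e ∈ E, ∑ i ∈ e, θ' e i = 1)
    (hbal : ∀ e ∈ E, ∀ i ∈ e, ∀ j ∈ e,
      b i + (∑ f ∈ E.filter (fun f => i ∈ f), θ f i) >
          b j + (∑ f ∈ E.filter (fun f => j ∈ f), θ f j) → θ e i = 0)
    (hbal' : ∀ e ∈ E, ∀ i ∈ e, ∀ j ∈ e,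
      b i + (∑ f ∈ E.filter (fun f => i ∈ f), θ' f i) >
          b j + (∑ f ∈ E.filter (fun f => j ∈ f), θ' f j) → θ' e i = 0) :
    ∀ i : V, b i + (∑ f ∈ E.filter (fun f => i ∈ f), θ f i) =
      b i + (∑ f ∈ E.filter (fun f => i ∈ f), θ' f i) := by
  classical
  set F : V → ℝ := fun i => b i + ∑ fa ∈ E.filter (fun fa => i ∈ fa), θ fa i with hF
  set G : V → ℝ := fun i => b i + ∑ fa ∈ E.filter (fun fa => i ∈ fa), θ' fa i with hG
  have hbalF : ∀ e ∈ E, ∀ i ∈ e, ∀ j ∈ e, F i > F j → θ e i = 0 := by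
    intro e he i hi j hj h; exact hbal e he i hi j hj h
  have hbalG : ∀ e ∈ E, ∀ i ∈ e, ∀ j ∈ e, G i > G j → θ' e i = 0 := by
    intro e he i hi j hj h; exact hbal' e he i hi j hj h
  -- per-edge inequality
  have hedge : ∀ e ∈ E, ∑ i ∈ e, (θ e i - θ' e i) * (F i - G i) ≤ 0 := by
    intro e he
    have hne : e.Nonempty := by
      by_contra h
      rw [Finset.not_nonempty_iff_eq_empty] at h
      have := hθsum e he
      simp [h] at this
    obtain ⟨i0, hi0, hαmin⟩ := e.exists_min_image F hne
    obtain ⟨j0, hj0, hβmin⟩ := e.exists_min_image G hne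
    have hθF : ∑ i ∈ e, θ e i * F i = F i0 := by
      have h1 : ∀ i ∈ e, θ e i * F i = θ e i * F i0 := by
        intro i hi
        by_cases hz : θ e i = 0
        · simp [hz]
        · have hle : F i ≤ F i0 := by
            by_contra hlt
            push_neg at hlt
            exact hz (hbalF e he i hi i0 hi0 hlt)
          rw [le_antisymm hle (hαmin i hi)]
      rw [Finset.sum_congr rfl h1, ← Finset.sum_mul, hθsum e he, one_mul]
    have hθ'G : ∑ i ∈ e, θ' e i * G i = G j0 := by
      have h1 : ∀ i ∈ e, θ' e i * G i = θ' e i * G j0 := by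
        intro i hi
        by_cases hz : θ' e i = 0
        · simp [hz]
        · have hle : G i ≤ G j0 := by
            by_contra hlt
            push_neg at hlt
            exact hz (hbalG e he i hi j0 hj0 hlt)
          rw [le_antisymm hle (hβmin i hi)]
      rw [Finset.sum_congr rfl h1, ← Finset.sum_mul, hθ'sum e he, one_mul]
    have hθ'F : F i0 ≤ ∑ i ∈ e, θ' e i * F i := by
      calc F i0 = (∑ i ∈ e, θ' e i) * F i0 := by rw [hθ'sum e he, one_mul]
        _ = ∑ i ∈ e, θ' e i * F i0 := by rw [Finset.sum_mul]
        _ ≤ ∑ i ∈ e, θ' e i * F i :=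
            Finset.sum_le_sum fun i hi =>
              mul_le_mul_of_nonneg_left (hαmin i hi) (hθ'0 e he i hi)
    have hθG : G j0 ≤ ∑ i ∈ e, θ e i * G i := by
      calc G j0 = (∑ i ∈ e, θ e i) * G j0 := by rw [hθsum e he, one_mul]
        _ = ∑ i ∈ e, θ e i * G j0 := by rw [Finset.sum_mul]
        _ ≤ ∑ i ∈ e, θ e i * G i :=
            Finset.sum_le_sum fun i hi =>
              mul_le_mul_of_nonneg_left (hβmin i hi) (hθ0 e he i hi)
    have hexp : ∑ i ∈ e, (θ e i - θ' e i) * (F i - G i)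
        = (∑ i ∈ e, θ e i * F i) - (∑ i ∈ e, θ e i * G i)
          - (∑ i ∈ e, θ' e i * F i) + (∑ i ∈ e, θ' e i * G i) := by
      rw [← Finset.sum_sub_distrib, ← Finset.sum_sub_distrib, ← Finset.sum_add_distrib]
      exact Finset.sum_congr rfl fun i _ => by ring
    rw [hexp, hθF, hθ'G]
    linarith
  -- the global sum of squares
  have hd : ∀ i : V, F i - G i = ∑ e ∈ E.filter (fun e => i ∈ e), (θ e i - θ' e i) := by
    intro i
    rw [Finset.sum_sub_distrib]
    simp [hF, hG]
  have hswap : ∑ i : V, (F i - G i) ^ 2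
      = ∑ e ∈ E, ∑ i ∈ e, (θ e i - θ' e i) * (F i - G i) := by
    have h1 : ∀ i : V, (F i - G i) ^ 2
        = ∑ e ∈ E.filter (fun e => i ∈ e), (θ e i - θ' e i) * (F i - G i) := by
      intro i
      rw [sq, ← Finset.sum_mul, ← hd i]
    calc ∑ i : V, (F i - G i) ^ 2
        = ∑ i : V, ∑ e ∈ E.filter (fun e => i ∈ e), (θ e i - θ' e i) * (F i - G i) := by
          exact Finset.sum_congr rfl fun i _ => h1 i
      _ = ∑ i : V, ∑ e ∈ E, if i ∈ e then (θ e i - θ' e i) * (F i - G i) else 0 := by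
          exact Finset.sum_congr rfl fun i _ => Finset.sum_filter _ _
      _ = ∑ e ∈ E, ∑ i : V, if i ∈ e then (θ e i - θ' e i) * (F i - G i) else 0 :=
          Finset.sum_comm
      _ = ∑ e ∈ E, ∑ i ∈ e, (θ e i - θ' e i) * (F i - G i) := by
          refine Finset.sum_congr rfl fun e _ => ?_
          rw [Finset.sum_ite_mem, Finset.univ_inter]
  have hSle : ∑ i : V, (F i - G i) ^ 2 ≤ 0 := by
    rw [hswap]
    exact Finset.sum_nonpos hedge
  have hS0 : ∑ i : V, (F i - G i) ^ 2 = 0 :=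
    le_antisymm hSle (Finset.sum_nonneg fun i _ => sq_nonneg _)
  have hall := (Finset.sum_eq_zero_iff_of_nonneg (fun i _ => sq_nonneg (F i - G i))).mp hS0
  intro i
  have h2 := hall i (Finset.mem_univ i)
  have h3 : F i - G i = 0 := by
    have := sq_eq_zero_iff.mp h2
    exact this
  have h4 : F i = G i := sub_eq_zero.mp h3
  exact h4
end

section
/- Let H be a finite hypergraph, ε > 0, and b: V(H) → ℝ a baseload. Then there exists an allocation θ: {(e,i) : e ∈ E(H), i ∈ e} → [0,1] satisfying, for every edge e and every i ∈ e, θ(e,i) = exp(−∂_b θ(i)/ε) / Σ_{j ∈ e} exp(−∂_b θ(j)/ε), where ∂_b θ(i) = b(i) + Σ_{e ∋ i} θ(e,i). (Such a θ automatically satisfies Σ_{i∈e} θ(e,i) = 1 for every e.) -/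
open Real Finset
set_option linter.unusedSectionVars false

namespace EpsBalancedAux

variable {V : Type*} [Fintype V] [DecidableEq V]

noncomputable def eload (E : Finset (Finset V)) (b : V → ℝ) (θ : Finset V → V → ℝ) (k : V) : ℝ :=
  b k + ∑ f ∈ E.filter (fun f => k ∈ f), θ f k

noncomputable def Phi (E : Finset (Finset V)) (ε : ℝ) (b : V → ℝ) (θ : Finset V → V → ℝ) : ℝ :=
  (∑ k : V, (eload E b θ k) ^ 2 / 2) - ε * ∑ f ∈ E, ∑ k ∈ f, Real.negMulLog (θ f k)

noncomputable def pert (θ : Finset V → V → ℝ) (e : Finset V) (i j : V) (t : ℝ) :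
    Finset V → V → ℝ :=
  Function.update θ e (fun k => if k = i then θ e i + t else if k = j then θ e j - t else θ e k)

lemma pert_apply (θ : Finset V → V → ℝ) (e : Finset V) {i j : V} (hij : i ≠ j) (t : ℝ)
    (f : Finset V) (k : V) :
    pert θ e i j t f k =
      θ f k + (if f = e ∧ k = i then t else 0) - (if f = e ∧ k = j then t else 0) := by
  unfold pert
  rcases eq_or_ne f e with rfl | hf
  · rw [Function.update_self]
    rcases eq_or_ne k i with rfl | hk
    · simp [hij]
    · rcases eq_or_ne k j with rfl | hk2
      · simp [hk]
      · simp [hk, hk2]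
  · rw [Function.update_of_ne hf]
    simp [hf]

lemma eload_pert (E : Finset (Finset V)) (b : V → ℝ) (θ : Finset V → V → ℝ)
    {e : Finset V} {i j : V} (he : e ∈ E) (hi : i ∈ e) (hj : j ∈ e) (hij : i ≠ j) (t : ℝ)
    (k : V) :
    eload E b (pert θ e i j t) k =
      eload E b θ k + (if k = i then t else 0) - (if k = j then t else 0) := by
  unfold eload
  have h1 : ∀ f ∈ E.filter (fun f => k ∈ f), pert θ e i j t f k =
      θ f k + (if f = e ∧ k = i then t else 0) - (if f = e ∧ k = j then t else 0) :=
    fun f _ => pert_apply θ e hij t f k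
  rw [Finset.sum_congr rfl h1]
  rw [Finset.sum_sub_distrib, Finset.sum_add_distrib]
  have h2 : ∀ (c : V), c ∈ e → (∑ f ∈ E.filter (fun f => k ∈ f), (if f = e ∧ k = c then t else 0))
      = (if k = c then t else 0) := by
    intro c hc
    rcases eq_or_ne k c with rfl | hkc
    · simp only [and_true]
      rw [Finset.sum_ite_eq' (E.filter (fun f => k ∈ f)) e (fun _ => t)]
      simp [Finset.mem_filter, he, hc]
    · simp [hkc]
  rw [h2 i hi, h2 j hj]
  ring

lemma ent_pert (E : Finset (Finset V)) (θ : Finset V → V → ℝ)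
    {e : Finset V} {i j : V} (he : e ∈ E) (hi : i ∈ e) (hj : j ∈ e) (hij : i ≠ j) (t : ℝ) :
    ∑ f ∈ E, ∑ k ∈ f, negMulLog (pert θ e i j t f k) =
      (∑ f ∈ E, ∑ k ∈ f, negMulLog (θ f k))
        + (negMulLog (θ e i + t) - negMulLog (θ e i))
        + (negMulLog (θ e j - t) - negMulLog (θ e j)) := by
  have hje : j ∈ e.erase i := Finset.mem_erase.mpr ⟨Ne.symm hij, hj⟩
  have hdec : ∀ (h : V → ℝ), ∑ k ∈ e, h k =
      ((∑ k ∈ (e.erase i).erase j, h k) + h j) + h i := by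
    intro h
    rw [← Finset.sum_erase_add e h hi, ← Finset.sum_erase_add (e.erase i) h hje]
  have hpe : ∀ f ∈ E.erase e, (∑ k ∈ f, negMulLog (pert θ e i j t f k)) =
      ∑ k ∈ f, negMulLog (θ f k) := by
    intro f hf
    refine Finset.sum_congr rfl fun k _ => ?_
    rw [pert_apply θ e hij t f k]
    simp [(Finset.mem_erase.mp hf).1]
  have hk1 : ∀ k ∈ (e.erase i).erase j, negMulLog (pert θ e i j t e k) = negMulLog (θ e k) := by
    intro k hk
    have h1 := Finset.mem_erase.mp hk
    have h2 := Finset.mem_erase.mp h1.2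
    rw [pert_apply θ e hij t e k]
    simp [h1.1, h2.1]
  have hpi : pert θ e i j t e i = θ e i + t := by
    rw [pert_apply θ e hij t e i]; simp [hij]
  have hpj : pert θ e i j t e j = θ e j - t := by
    rw [pert_apply θ e hij t e j]; simp [Ne.symm hij]
  have hinner : ∑ k ∈ e, negMulLog (pert θ e i j t e k) =
      (∑ k ∈ e, negMulLog (θ e k)) + (negMulLog (θ e i + t) - negMulLog (θ e i))
        + (negMulLog (θ e j - t) - negMulLog (θ e j)) := by
    rw [hdec (fun k => negMulLog (pert θ e i j t e k)), hdec (fun k => negMulLog (θ e k))]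
    rw [Finset.sum_congr rfl hk1, hpi, hpj]
    ring
  rw [← Finset.sum_erase_add E _ he,
    ← Finset.sum_erase_add E (fun f => ∑ k ∈ f, negMulLog (θ f k)) he]
  rw [Finset.sum_congr rfl hpe, hinner]
  ring

lemma Phi_pert (E : Finset (Finset V)) (ε : ℝ) (b : V → ℝ) (θ : Finset V → V → ℝ)
    {e : Finset V} {i j : V} (he : e ∈ E) (hi : i ∈ e) (hj : j ∈ e) (hij : i ≠ j) (t : ℝ) :
    Phi E ε b (pert θ e i j t) =
      Phi E ε b θ + t * eload E b θ i - t * eload E b θ j + t ^ 2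
        - ε * ((negMulLog (θ e i + t) - negMulLog (θ e i))
          + (negMulLog (θ e j - t) - negMulLog (θ e j))) := by
  unfold Phi
  rw [ent_pert E θ he hi hj hij t]
  have hje : j ∈ (Finset.univ : Finset V).erase i :=
    Finset.mem_erase.mpr ⟨Ne.symm hij, Finset.mem_univ j⟩
  have hdec : ∀ (h : V → ℝ), ∑ k : V, h k =
      ((∑ k ∈ ((Finset.univ : Finset V).erase i).erase j, h k) + h j) + h i := by
    intro h
    rw [← Finset.sum_erase_add Finset.univ h (Finset.mem_univ i),
      ← Finset.sum_erase_add ((Finset.univ : Finset V).erase i) h hje]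
  have hq : ∑ k : V, (eload E b (pert θ e i j t) k) ^ 2 / 2 =
      (∑ k : V, (eload E b θ k) ^ 2 / 2) + t * eload E b θ i - t * eload E b θ j + t ^ 2 := by
    rw [hdec (fun k => (eload E b (pert θ e i j t) k) ^ 2 / 2),
      hdec (fun k => (eload E b θ k) ^ 2 / 2)]
    have hk1 : ∀ k ∈ ((Finset.univ : Finset V).erase i).erase j,
        (eload E b (pert θ e i j t) k) ^ 2 / 2 = (eload E b θ k) ^ 2 / 2 := by
      intro k hk
      have h1 := Finset.mem_erase.mp hk
      have h2 := Finset.mem_erase.mp h1.2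
      rw [eload_pert E b θ he hi hj hij t k]
      simp [h1.1, h2.1]
    rw [Finset.sum_congr rfl hk1, eload_pert E b θ he hi hj hij t i,
      eload_pert E b θ he hi hj hij t j]
    simp only [if_pos rfl, if_neg hij, if_neg (Ne.symm hij), if_true]
    ring
  rw [hq]
  ring

lemma sum_pert_edge (θ : Finset V → V → ℝ)
    {e : Finset V} {i j : V} (hi : i ∈ e) (hj : j ∈ e) (hij : i ≠ j) (t : ℝ)
    (f : Finset V) :
    ∑ k ∈ f, pert θ e i j t f k = ∑ k ∈ f, θ f k := by
  have h1 : ∀ k ∈ f, pert θ e i j t f k =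
      θ f k + (if f = e ∧ k = i then t else 0) - (if f = e ∧ k = j then t else 0) :=
    fun k _ => pert_apply θ e hij t f k
  rw [Finset.sum_congr rfl h1, Finset.sum_sub_distrib, Finset.sum_add_distrib]
  rcases eq_or_ne f e with rfl | hf
  · simp only [true_and]
    rw [Finset.sum_ite_eq' f i (fun _ => t), Finset.sum_ite_eq' f j (fun _ => t)]
    simp [hi, hj]
  · simp [hf]

end EpsBalancedAux

open EpsBalancedAux in
theorem exists_epsilon_balanced_allocation
    {V : Type*} [Fintype V] [DecidableEq V]
    (E : Finset (Finset V)) (hE : ∀ e ∈ E, e.Nonempty)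
    (ε : ℝ) (hε : 0 < ε) (b : V → ℝ) :
    ∃ θ : Finset V → V → ℝ,
      (∀ e ∈ E, ∀ i ∈ e, 0 ≤ θ e i ∧ θ e i ≤ 1) ∧
      ∀ e ∈ E, ∀ i ∈ e,
        θ e i =
          Real.exp (-(b i + ∑ f ∈ E.filter (fun f => i ∈ f), θ f i) / ε) /
            ∑ j ∈ e,
              Real.exp (-(b j + ∑ f ∈ E.filter (fun f => j ∈ f), θ f j) / ε) := by
  classical
  set A : Set (Finset V → V → ℝ) := {θ | ∀ f k, θ f k ∈ Set.Icc (0:ℝ) 1} with hA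
  set B : Set (Finset V → V → ℝ) := {θ | ∀ e ∈ E, ∑ k ∈ e, θ e k = 1} with hB
  have hAcomp : IsCompact A := by
    have : A = Set.univ.pi (fun _ : Finset V => Set.univ.pi fun _ : V => Set.Icc (0:ℝ) 1) := by
      ext θ; simp [hA, Set.mem_pi, Pi.le_def, forall_and]
    rw [this]
    exact isCompact_univ_pi fun _ => isCompact_univ_pi fun _ => isCompact_Icc
  have hBclosed : IsClosed B := by
    have : B = ⋂ e ∈ E, {θ : Finset V → V → ℝ | ∑ k ∈ e, θ e k = 1} := by
      ext θ; simp [hB]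
    rw [this]
    refine isClosed_biInter fun e _ => ?_
    exact isClosed_eq (continuous_finset_sum _ fun k _ =>
      (continuous_apply k).comp (continuous_apply e)) continuous_const
  have hDcomp : IsCompact (A ∩ B) := hAcomp.inter_right hBclosed
  -- nonemptiness
  have hDne : (A ∩ B).Nonempty := by
    refine ⟨fun f k => if k ∈ f then (f.card : ℝ)⁻¹ else 0, ?_, ?_⟩
    · intro f k
      by_cases hk : k ∈ f
      · have hc : (1:ℝ) ≤ f.card := by
          exact_mod_cast Finset.card_pos.mpr ⟨k, hk⟩
        simp only [hk, if_true]
        constructor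
        · positivity
        · rw [inv_le_one_iff₀]; right; exact hc
      · simp [hk]
    · intro e he
      have hne := hE e he
      have hc : (e.card : ℝ) ≠ 0 := by
        exact_mod_cast Finset.card_ne_zero_of_mem hne.choose_spec
      have : ∀ k ∈ e, (if k ∈ e then ((e.card : ℝ))⁻¹ else 0) = (e.card : ℝ)⁻¹ :=
        fun k hk => by simp [hk]
      rw [Finset.sum_congr rfl this, Finset.sum_const, nsmul_eq_mul, mul_inv_cancel₀ hc]
  -- continuity
  have hcont : Continuous (Phi E ε b) := by
    unfold Phi eload
    refine Continuous.sub ?_ (continuous_const.mul ?_)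
    · exact continuous_finset_sum _ fun k _ =>
        (((continuous_const.add (continuous_finset_sum _ fun f _ =>
          (continuous_apply k).comp (continuous_apply f))).pow 2).div_const 2)
    · exact continuous_finset_sum _ fun f _ => continuous_finset_sum _ fun k _ =>
        Real.continuous_negMulLog.comp ((continuous_apply k).comp (continuous_apply f))
  obtain ⟨θ, hθD, hmin'⟩ := hDcomp.exists_isMinOn hDne hcont.continuousOn
  have hmin : ∀ σ ∈ A ∩ B, Phi E ε b θ ≤ Phi E ε b σ := isMinOn_iff.mp hmin'
  have hbox : ∀ f k, 0 ≤ θ f k ∧ θ f k ≤ 1 := fun f k => hθD.1 f k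
  have hsum : ∀ e ∈ E, ∑ k ∈ e, θ e k = 1 := hθD.2
  -- membership helper for perturbations
  have hmemD : ∀ (e : Finset V), e ∈ E → ∀ (i j : V), i ∈ e → j ∈ e → i ≠ j → ∀ t : ℝ,
      θ e i + t ∈ Set.Icc (0:ℝ) 1 → θ e j - t ∈ Set.Icc (0:ℝ) 1 →
      pert θ e i j t ∈ A ∩ B := by
    intro e he i j hi hj hij t hti htj
    constructor
    · intro f k
      rw [pert_apply θ e hij t f k]
      by_cases h1 : f = e ∧ k = i
      · obtain ⟨rfl, rfl⟩ := h1
        rw [if_pos ⟨rfl, rfl⟩, if_neg (fun h => hij h.2)]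
        simpa using hti
      · by_cases h2 : f = e ∧ k = j
        · obtain ⟨rfl, rfl⟩ := h2
          rw [if_neg h1, if_pos ⟨rfl, rfl⟩]
          simpa using htj
        · rw [if_neg h1, if_neg h2]
          simpa using hbox f k
    · intro e' he'
      rw [sum_pert_edge θ hi hj hij t e']
      exact hsum e' he'
  -- positivity of the minimizer
  have hpos : ∀ e ∈ E, ∀ i ∈ e, 0 < θ e i := by
    intro e he i hi
    by_contra hneg
    have hx0 : θ e i = 0 := le_antisymm (not_lt.mp hneg) (hbox e i).1
    obtain ⟨j, hj, hxj⟩ : ∃ j ∈ e, 0 < θ e j := by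
      by_contra hc
      push_neg at hc
      have h1 : ∑ k ∈ e, θ e k ≤ 0 := Finset.sum_nonpos hc
      rw [hsum e he] at h1; linarith
    have hij : i ≠ j := by
      rintro rfl; rw [hx0] at hxj; exact lt_irrefl _ hxj
    set Aq := eload E b θ i - eload E b θ j with hAq
    set M := |Real.log (θ e j / 2)| with hM
    set t := min (θ e j / 2) (min (1/2 : ℝ) (Real.exp ((-(Aq + 2) - ε * M)/ε))) with htdef
    have ht0 : 0 < t := lt_min (by linarith) (lt_min (by norm_num) (Real.exp_pos _))
    have ht1 : t ≤ θ e j / 2 := min_le_left _ _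
    have ht2 : t ≤ 1/2 := le_trans (min_le_right _ _) (min_le_left _ _)
    have ht3 : ε * Real.log t ≤ -(Aq + 2) - ε * M := by
      have hlt : Real.log t ≤ (-(Aq + 2) - ε * M)/ε := by
        have h := Real.log_le_log ht0 (le_trans (min_le_right _ _) (min_le_right _ _))
        rwa [Real.log_exp] at h
      calc ε * Real.log t ≤ ε * ((-(Aq + 2) - ε * M)/ε) :=
            mul_le_mul_of_nonneg_left hlt hε.le
        _ = -(Aq + 2) - ε * M := by field_simp
    have hmem : pert θ e i j t ∈ A ∩ B := by
      refine hmemD e he i j hi hj hij t ?_ ?_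
      · rw [hx0]; constructor <;> simp <;> linarith
      · constructor
        · simp; linarith
        · have := (hbox e j).2; simp; linarith
    have hle := hmin _ hmem
    rw [Phi_pert E ε b θ he hi hj hij t] at hle
    rw [hx0] at hle
    simp only [zero_add, Real.negMulLog_zero, sub_zero] at hle
    simp only [Real.negMulLog] at hle
    -- entropy bound facts
    have hxjt : 0 < θ e j - t := by linarith
    have hlog1 : Real.log (θ e j - t) ≤ Real.log (θ e j) := Real.log_le_log hxjt (by linarith)
    have hlog2 : -M ≤ Real.log (θ e j - t) := by
      have h := Real.log_le_log (by linarith : (0:ℝ) < θ e j / 2)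
        (by linarith : θ e j / 2 ≤ θ e j - t)
      have h2 : -(|Real.log (θ e j / 2)|) ≤ Real.log (θ e j / 2) := neg_abs_le _
      rw [hM]; linarith
    have hq1 : ε * Real.log t * t ≤ (-(Aq + 2) - ε * M) * t :=
      mul_le_mul_of_nonneg_right ht3 ht0.le
    have hp1 : θ e j * (Real.log (θ e j - t) - Real.log (θ e j)) ≤ 0 :=
      mul_nonpos_of_nonneg_of_nonpos hxj.le (by linarith)
    have hp2 : -(t * Real.log (θ e j - t)) ≤ t * M := by nlinarith
    have htt : t * t ≤ (1/2) * t := by nlinarith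
    nlinarith [hle, hε, ht0]
  -- stationarity
  have hkey : ∀ e ∈ E, ∀ i ∈ e, ∀ j ∈ e,
      eload E b θ i + ε * Real.log (θ e i) = eload E b θ j + ε * Real.log (θ e j) := by
    intro e he i hi j hj
    rcases eq_or_ne i j with rfl | hij
    · rfl
    have hxi := hpos e he i hi
    have hxj := hpos e he j hj
    have hpair : θ e i + θ e j ≤ 1 := by
      have hsub : ({i, j} : Finset V) ⊆ e := by
        intro k hk
        simp only [Finset.mem_insert, Finset.mem_singleton] at hk
        rcases hk with rfl | rfl <;> assumption
      have h := Finset.sum_le_sum_of_subset_of_nonneg hsub (fun k hk _ => (hbox e k).1)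
      rw [Finset.sum_pair hij, hsum e he] at h
      exact h
    set δ := min (θ e i) (θ e j) with hδdef
    have hδ : 0 < δ := lt_min hxi hxj
    set g : ℝ → ℝ := fun t => Phi E ε b θ + t * eload E b θ i - t * eload E b θ j + t ^ 2
      - ε * ((Real.negMulLog (θ e i + t) - Real.negMulLog (θ e i))
        + (Real.negMulLog (θ e j - t) - Real.negMulLog (θ e j))) with hg
    have hg0 : g 0 = Phi E ε b θ := by simp [hg]
    have hloc : IsLocalMin g 0 := by
      have hnb : Set.Ioo (-δ) δ ∈ nhds (0:ℝ) := Ioo_mem_nhds (by linarith) hδ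
      rw [IsLocalMin, IsMinFilter]
      refine Filter.eventually_of_mem hnb fun t ht => ?_
      obtain ⟨ht1, ht2⟩ := ht
      have hδi : δ ≤ θ e i := min_le_left _ _
      have hδj : δ ≤ θ e j := min_le_right _ _
      have hmem : pert θ e i j t ∈ A ∩ B := by
        refine hmemD e he i j hi hj hij t ⟨by linarith, by linarith⟩ ⟨by linarith, by linarith⟩
      have h := hmin _ hmem
      rw [Phi_pert E ε b θ he hi hj hij t] at h
      rw [hg0]
      exact h
    have hd1 : HasDerivAt (fun t => Real.negMulLog (θ e i + t)) (-Real.log (θ e i) - 1) 0 := by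
      have hinner : HasDerivAt (fun t : ℝ => θ e i + t) 1 0 := by
        simpa using (hasDerivAt_id (0:ℝ)).const_add (θ e i)
      have houter : HasDerivAt Real.negMulLog (-Real.log (θ e i) - 1) ((fun t : ℝ => θ e i + t) 0) := by
        simpa using Real.hasDerivAt_negMulLog (ne_of_gt hxi)
      exact (houter.comp 0 hinner).congr_deriv (by ring)
    have hd2 : HasDerivAt (fun t => Real.negMulLog (θ e j - t)) (Real.log (θ e j) + 1) 0 := by
      have hinner : HasDerivAt (fun t : ℝ => θ e j - t) (-1) 0 := by
        simpa using (hasDerivAt_id (0:ℝ)).const_sub (θ e j)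
      have houter : HasDerivAt Real.negMulLog (-Real.log (θ e j) - 1) ((fun t : ℝ => θ e j - t) 0) := by
        simpa using Real.hasDerivAt_negMulLog (ne_of_gt hxj)
      have := houter.comp 0 hinner
      exact this.congr_deriv (by ring)
    have hd : HasDerivAt g (eload E b θ i - eload E b θ j
        - ε * (Real.log (θ e j) - Real.log (θ e i))) 0 := by
      have h1 : HasDerivAt (fun t : ℝ => Phi E ε b θ + t * eload E b θ i
          - t * eload E b θ j + t ^ 2) (eload E b θ i - eload E b θ j) 0 := by
        have := (((hasDerivAt_const (0:ℝ) (Phi E ε b θ)).add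
          ((hasDerivAt_id (0:ℝ)).mul_const (eload E b θ i))).sub
          ((hasDerivAt_id (0:ℝ)).mul_const (eload E b θ j))).add (hasDerivAt_pow 2 (0:ℝ))
        exact this.congr_deriv (by norm_num)
      have h2 : HasDerivAt (fun t : ℝ => ε * ((Real.negMulLog (θ e i + t) - Real.negMulLog (θ e i))
          + (Real.negMulLog (θ e j - t) - Real.negMulLog (θ e j))))
          (ε * (Real.log (θ e j) - Real.log (θ e i))) 0 := by
        have := (((hd1.sub_const (Real.negMulLog (θ e i)))).add
          (hd2.sub_const (Real.negMulLog (θ e j)))).const_mul ε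
        exact this.congr_deriv (by ring)
      exact h1.sub h2
    have h0 := hloc.hasDerivAt_eq_zero hd
    have hεne : ε ≠ 0 := ne_of_gt hε
    nlinarith [h0]
  -- conclusion
  refine ⟨θ, fun e he i hi => hbox e i, ?_⟩
  intro e he i hi
  show θ e i = Real.exp (-(eload E b θ i) / ε) / ∑ j ∈ e, Real.exp (-(eload E b θ j) / ε)
  have hxi := hpos e he i hi
  set S := ∑ j ∈ e, Real.exp (-(eload E b θ j) / ε) with hS
  have hSpos : 0 < S := Finset.sum_pos (fun j _ => Real.exp_pos _) (hE e he)
  have hterm : ∀ j ∈ e, θ e j =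
      θ e i * Real.exp (eload E b θ i / ε) * Real.exp (-(eload E b θ j) / ε) := by
    intro j hj
    have hxj := hpos e he j hj
    have hk := hkey e he j hj i hi
    have hlog : Real.log (θ e j) = Real.log (θ e i) + (eload E b θ i - eload E b θ j) / ε := by
      field_simp
      linarith
    calc θ e j = Real.exp (Real.log (θ e j)) := (Real.exp_log hxj).symm
      _ = Real.exp (Real.log (θ e i) + (eload E b θ i / ε + (-(eload E b θ j)) / ε)) := by
          rw [hlog]; ring_nf
      _ = θ e i * Real.exp (eload E b θ i / ε) * Real.exp (-(eload E b θ j) / ε) := by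
          rw [Real.exp_add, Real.exp_add, Real.exp_log hxi, mul_assoc]
  have h1 : θ e i * Real.exp (eload E b θ i / ε) * S = 1 := by
    rw [hS, Finset.mul_sum, ← Finset.sum_congr rfl hterm, hsum e he]
  have hprod : Real.exp (eload E b θ i / ε) * Real.exp (-(eload E b θ i) / ε) = 1 := by
    rw [← Real.exp_add]
    norm_num [neg_div]
  rw [eq_div_iff (ne_of_gt hSpos)]
  linear_combination Real.exp (-(eload E b θ i) / ε) * h1 - θ e i * S * hprod
end

section
/- Let θ, θ' ∈ [0,1]^{e} be two probability vectors indexed by a finite edge e (Σ θ = Σ θ' = 1), and let l, l': e → ℝ be load vectors such that θ is supported on argmin l and θ' is supported on argmin l'. If min l > min l', then Σ_{i ∈ e} (θ_i − θ'_i)·1[l_i > l'_i] ≤ Σ_{i ∈ argmin l'} (θ_i − θ'_i) + Σ_{i ∈ argmin l \ argmin l'} θ_i = 0, i.e. the sum is at most 0; and if min l ≤ min l', the same sum is also at most 0. -/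
theorem balanced_comparison_key_inequality
    {ι : Type*} [Fintype ι] [Nonempty ι]
    (θ θ' l l' : ι → ℝ)
    (hθ : ∀ i, 0 ≤ θ i) (hθ' : ∀ i, 0 ≤ θ' i)
    (hsum : ∑ i, θ i = 1) (hsum' : ∑ i, θ' i = 1)
    (hsupp : ∀ i, l i ≠ Finset.univ.inf' Finset.univ_nonempty l → θ i = 0)
    (hsupp' : ∀ i, l' i ≠ Finset.univ.inf' Finset.univ_nonempty l' → θ' i = 0) :
    (Finset.univ.inf' Finset.univ_nonempty l' <
        Finset.univ.inf' Finset.univ_nonempty l →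
      (∑ i, (θ i - θ' i) * (if l' i < l i then (1 : ℝ) else 0)) ≤
          ((∑ i ∈ Finset.univ.filter
              (fun i => l' i = Finset.univ.inf' Finset.univ_nonempty l'),
              (θ i - θ' i)) +
            ∑ i ∈ Finset.univ.filter
              (fun i => l i = Finset.univ.inf' Finset.univ_nonempty l ∧
                l' i ≠ Finset.univ.inf' Finset.univ_nonempty l'), θ i) ∧
        ((∑ i ∈ Finset.univ.filter
              (fun i => l' i = Finset.univ.inf' Finset.univ_nonempty l'),
              (θ i - θ' i)) +
            ∑ i ∈ Finset.univ.filter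
              (fun i => l i = Finset.univ.inf' Finset.univ_nonempty l ∧
                l' i ≠ Finset.univ.inf' Finset.univ_nonempty l'), θ i) = 0) ∧
    (Finset.univ.inf' Finset.univ_nonempty l ≤
        Finset.univ.inf' Finset.univ_nonempty l' →
      (∑ i, (θ i - θ' i) * (if l' i < l i then (1 : ℝ) else 0)) ≤ 0) := by
  set m := Finset.univ.inf' Finset.univ_nonempty l with hm
  set m' := Finset.univ.inf' Finset.univ_nonempty l' with hm'
  have hml : ∀ i, m ≤ l i := fun i => Finset.inf'_le _ (Finset.mem_univ i)
  have hml' : ∀ i, m' ≤ l' i := fun i => Finset.inf'_le _ (Finset.mem_univ i)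
  constructor
  · intro hlt
    have hAB : ((∑ i ∈ Finset.univ.filter (fun i => l' i = m'), (θ i - θ' i)) +
        ∑ i ∈ Finset.univ.filter (fun i => l i = m ∧ l' i ≠ m'), θ i) =
        ∑ i, ((if l' i = m' then θ i - θ' i else 0) +
          (if l i = m ∧ l' i ≠ m' then θ i else 0)) := by
      rw [Finset.sum_filter, Finset.sum_filter, ← Finset.sum_add_distrib]
    constructor
    · rw [hAB]
      apply Finset.sum_le_sum
      intro i _
      by_cases h1 : l' i = m'
      · have hlt' : l' i < l i := by
          rw [h1]; exact lt_of_lt_of_le hlt (hml i)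
        have h4 : ¬(l i = m ∧ l' i ≠ m') := by simp [h1]
        rw [if_pos h1, if_pos hlt', if_neg h4, add_zero, mul_one]
      · have hz : θ' i = 0 := hsupp' i h1
        by_cases h2 : l i = m
        · have h4 : l i = m ∧ l' i ≠ m' := ⟨h2, h1⟩
          rw [if_neg h1, if_pos h4, zero_add, hz, sub_zero]
          split_ifs <;> simp [hθ i]
        · have hz2 : θ i = 0 := hsupp i h2
          simp [h1, h2, hz, hz2]
    · rw [hAB]
      have hg : ∀ i, (if l' i = m' then θ i - θ' i else 0) +
          (if l i = m ∧ l' i ≠ m' then θ i else 0) = θ i - θ' i := by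
        intro i
        by_cases h1 : l' i = m'
        · simp [h1]
        · have hz : θ' i = 0 := hsupp' i h1
          by_cases h2 : l i = m
          · simp [h1, h2, hz]
          · have hz2 : θ i = 0 := hsupp i h2
            simp [h1, h2, hz, hz2]
      simp_rw [hg]
      rw [Finset.sum_sub_distrib, hsum, hsum']
      ring
  · intro hle
    have hpt : ∀ i ∈ Finset.univ, (θ i - θ' i) * (if l' i < l i then (1:ℝ) else 0) ≤ 0 := by
      intro i _
      by_cases h : l' i < l i
      · have hne : l i ≠ m := by
          intro he
          have := hml' i
          rw [he] at h
          linarith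
        have hz : θ i = 0 := hsupp i hne
        simp [h, hz]
        exact hθ' i
      · simp [h]
    calc (∑ i, (θ i - θ' i) * (if l' i < l i then (1:ℝ) else 0)) ≤ ∑ _i : ι, (0:ℝ) :=
          Finset.sum_le_sum hpt
      _ = 0 := by simp
end
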